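/- arXiv:1306.5469 — 3 statements merged into one kernel-verified Lean document; each statement's English description precedes it below -/
import Mathlib

section
/- For all constants 0 < c₀ ≤ C₀ there exists a constant c > 0 (depending only on c₀ and C₀) such that the following holds. Let a, x, y ∈ ℝ² with x ≠ y and c₀ ≤ |a−x| ≤ C₀, c₀ ≤ |a−y| ≤ C₀. Then |P_a(x) − P_a(y)| ≥ c · |x−y| · dist(a, ℓ_{x,y}), where |P_a(x) − P_a(y)| denotes the arc-length of the shorter arc of S¹ with endpoints P_a(x) and P_a(y), and ℓ_{x,y} is the line through x and y. -/
open MeasureTheory Metric Set RealInnerProductSpace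

/-- The radial projection from the vantage point `a`: `P_a(x) = (x - a)/|x - a|`. -/
noncomputable def radialProj (a x : ℂ) : ℂ := ‖x - a‖⁻¹ • (x - a)

/-- The line through two points `x` and `y`. -/
noncomputable def lineThrough (x y : ℂ) : Set ℂ := {z : ℂ | ∃ t : ℝ, z = x + t • (y - x)}

/-- The arc-length of the shorter arc of the unit circle between the unit vectors
`u` and `v`, i.e. the angle `arccos ⟨u, v⟩`. -/
noncomputable def arcDist (u v : ℂ) : ℝ := Real.arccos (u.re * v.re + u.im * v.im)

open InnerProductGeometry in
lemma arcDist_eq_angle (u v : ℂ) (hu : ‖u‖ = 1) (hv : ‖v‖ = 1) :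
    arcDist u v = angle u v := by
  unfold arcDist angle
  rw [hu, hv]
  norm_num
  rw [mul_comm v.re, mul_comm v.im]


open InnerProductGeometry in
lemma key_eq (u w : ℂ) (hw : w ≠ 0) :
    ‖w‖ * ‖u - (⟪u, w⟫ / ⟪w, w⟫) • w‖ =
      Real.sin (angle u (u - w)) * (‖u‖ * ‖u - w‖) := by
  have hC : (⟪w, w⟫ : ℝ) ≠ 0 := inner_self_ne_zero.2 hw
  set A := (⟪u, u⟫ : ℝ) with hA
  set B := (⟪u, w⟫ : ℝ) with hB
  set C := (⟪w, w⟫ : ℝ) with hCd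
  rw [sin_angle_mul_norm_mul_norm]
  rw [← Real.sqrt_sq (by positivity : (0:ℝ) ≤ ‖w‖ * ‖u - (B / C) • w‖)]
  congr 1
  have h1 : (‖w‖ * ‖u - (B / C) • w‖) ^ 2
      = C * ⟪u - (B / C) • w, u - (B / C) • w⟫ := by
    rw [real_inner_self_eq_norm_sq, hCd, real_inner_self_eq_norm_sq]; ring
  rw [h1]
  simp only [inner_sub_left, inner_sub_right, real_inner_smul_left,
    real_inner_smul_right, real_inner_comm w u, ← hA, ← hB, ← hCd]
  linear_combination (B / C * C - B) * (div_mul_cancel₀ B hC) +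
    (2 * C * B * C⁻¹ - (⟪w, u⟫ : ℝ) - B) * (real_inner_comm w u)

open InnerProductGeometry in
/-- Geometric lemma: if `|a - x|` and `|a - y|` are comparable to `1`, then
`|P_a(x) - P_a(y)| ≳ |x - y| · dist(a, ℓ_{x,y})`. -/
theorem stmt5 (c₀ C₀ : ℝ) (hc₀ : 0 < c₀) (hc₀C₀ : c₀ ≤ C₀) :
    ∃ c : ℝ, 0 < c ∧ ∀ a x y : ℂ, x ≠ y →
      c₀ ≤ dist a x → dist a x ≤ C₀ → c₀ ≤ dist a y → dist a y ≤ C₀ →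
      c * (dist x y * Metric.infDist a (lineThrough x y)) ≤
        arcDist (radialProj a x) (radialProj a y) := by
  have hC₀ : 0 < C₀ := hc₀.trans_le hc₀C₀
  refine ⟨(C₀ * C₀)⁻¹, by positivity, fun a x y hxy h1 h2 h3 h4 => ?_⟩
  have hxa : x - a ≠ 0 := by
    intro h
    rw [sub_eq_zero] at h
    subst h
    simp at h1
    linarith
  have hya : y - a ≠ 0 := by
    intro h
    rw [sub_eq_zero] at h
    subst h
    simp at h3
    linarith
  have hw : y - x ≠ 0 := sub_ne_zero.2 (Ne.symm hxy)
  -- arcDist equals the angle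
  have hnx : ‖radialProj a x‖ = 1 := by
    unfold radialProj
    rw [norm_smul, norm_inv, norm_norm, inv_mul_cancel₀ (norm_ne_zero_iff.2 hxa)]
  have hny : ‖radialProj a y‖ = 1 := by
    unfold radialProj
    rw [norm_smul, norm_inv, norm_norm, inv_mul_cancel₀ (norm_ne_zero_iff.2 hya)]
  rw [arcDist_eq_angle _ _ hnx hny]
  have hang : angle (radialProj a x) (radialProj a y) = angle (a - x) (a - y) := by
    unfold radialProj
    rw [angle_smul_left_of_pos _ _ (inv_pos.2 (norm_pos_iff.2 hxa)),
      angle_smul_right_of_pos _ _ (inv_pos.2 (norm_pos_iff.2 hya)),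
      ← angle_neg_neg, neg_sub, neg_sub]
  rw [hang]
  set θ := angle (a - x) (a - y) with hθ
  have hθ0 : 0 ≤ θ := angle_nonneg _ _
  have hθπ : θ ≤ Real.pi := angle_le_pi _ _
  have hsin : Real.sin θ ≤ θ := Real.sin_le hθ0
  -- the foot of the perpendicular
  set u := a - x with hu
  set w := y - x with hwdef
  set t : ℝ := ⟪u, w⟫ / ⟪w, w⟫ with ht
  have hz : x + t • (y - x) ∈ lineThrough x y := ⟨t, rfl⟩
  have hinf : Metric.infDist a (lineThrough x y) ≤ dist a (x + t • (y - x)) :=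
    Metric.infDist_le_dist_of_mem hz
  have hdz : dist a (x + t • (y - x)) = ‖u - t • w‖ := by
    rw [dist_eq_norm]
    congr 1
    simp only [hu, hwdef]
    ring
  have huw : u - w = a - y := by simp only [hu, hwdef]; ring
  have hkey : ‖w‖ * ‖u - t • w‖ = Real.sin θ * (‖u‖ * ‖a - y‖) := by
    have h := key_eq u w hw
    rw [huw, ← hθ] at h
    exact h
  have hdxy : dist x y = ‖w‖ := by rw [dist_eq_norm, hwdef, norm_sub_rev]
  have hnu : ‖u‖ ≤ C₀ := by rwa [hu, ← dist_eq_norm]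
  have hnv : ‖a - y‖ ≤ C₀ := by rw [← dist_eq_norm]; exact h4
  have hsin0 : 0 ≤ Real.sin θ := Real.sin_nonneg_of_nonneg_of_le_pi hθ0 hθπ
  have step1 : dist x y * Metric.infDist a (lineThrough x y) ≤ Real.sin θ * (C₀ * C₀) := by
    calc dist x y * Metric.infDist a (lineThrough x y)
        ≤ dist x y * dist a (x + t • (y - x)) := by
          apply mul_le_mul_of_nonneg_left hinf dist_nonneg
      _ = Real.sin θ * (‖u‖ * ‖a - y‖) := by rw [hdz, hdxy, hkey]
      _ ≤ Real.sin θ * (C₀ * C₀) := by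
          apply mul_le_mul_of_nonneg_left _ hsin0
          exact mul_le_mul hnu hnv (norm_nonneg _) hC₀.le
  rw [inv_mul_le_iff₀ (by positivity)]
  calc dist x y * Metric.infDist a (lineThrough x y)
      ≤ Real.sin θ * (C₀ * C₀) := step1
    _ ≤ θ * (C₀ * C₀) := by
        apply mul_le_mul_of_nonneg_right hsin (by positivity)
    _ = C₀ * C₀ * θ := mul_comm _ _
end

section
/- Fix d ≥ 1 and an absolute constant c ≥ 1, and let 𝓛_δ be the δ-discretized family of lines meeting B(0,d): the lines with direction angle k₁δ (k₁ ∈ ℤ ∩ [0, πδ^{−1}]) at distance k₂δ from the origin (k₂ ∈ ℤ ∩ [0, dδ^{−1}]); note |𝓛_δ| ∼ δ^{−2}. Let A ⊆ [0,1]² be a discrete (α,C₀,δ)-set that is unconcentrated on lines, and define f_δ(ℓ) := #(A ∩ ℓ^{cδ}) for ℓ ∈ 𝓛_δ. Then there exist constants C, M > 0 depending only on c, d, α, C₀ (not on δ) such that (1/|𝓛_δ|) Σ_{ℓ ∈ 𝓛_δ} f_δ(ℓ)² ≤ C |log δ|^M δ^{1−α}. -/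
open MeasureTheory Metric Set

/-- A line in the plane. -/
def IsLine (ℓ : Set ℂ) : Prop := ∃ p v : ℂ, v ≠ 0 ∧ ℓ = {w : ℂ | ∃ t : ℝ, w = p + t • v}

/-- The closed unit square `[0,1]²`. -/
def unitSq : Set ℂ := {w : ℂ | w.re ∈ Icc (0:ℝ) 1 ∧ w.im ∈ Icc (0:ℝ) 1}

/-- A discrete `(α, C, δ)`-set that is unconcentrated on lines. -/
def DiscUnconc (α C δ : ℝ) (A : Set ℂ) : Prop :=
  A.Finite ∧
  (∀ x ∈ A, ∀ y ∈ A, x ≠ y → δ ≤ dist x y) ∧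
  C⁻¹ * δ ^ (-α) ≤ (A.ncard : ℝ) ∧
  (A.ncard : ℝ) ≤ C * δ ^ (-α) ∧
  (∀ (x : ℂ) (r : ℝ), δ ≤ r →
      ((A ∩ closedBall x r).ncard : ℝ) ≤ C * r ^ α * (A.ncard : ℝ)) ∧
  (∀ ℓ : Set ℂ, IsLine ℓ →
      ((A ∩ cthickening C⁻¹ ℓ).ncard : ℝ) ≤ (A.ncard : ℝ) / 10)

/-- The unit direction vector with angle `k₁ δ`. -/
noncomputable def dDir (δ : ℝ) (k : ℤ × ℤ) : ℂ := Complex.exp (((k.1 : ℝ) * δ) * Complex.I)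

/-- The line with direction angle `k₁ δ` at distance `k₂ δ` from the origin. -/
noncomputable def dline (δ : ℝ) (k : ℤ × ℤ) : Set ℂ :=
  {z : ℂ | ∃ t : ℝ, z = (((k.2 : ℝ) * δ : ℝ) : ℂ) * (Complex.I * dDir δ k) + (t : ℂ) * dDir δ k}

/-- The index set of the `δ`-discretized family of lines meeting `B(0,d)`:
`k₁ ∈ ℤ ∩ [0, π δ⁻¹]`, `k₂ ∈ ℤ ∩ [0, d δ⁻¹]`. -/
noncomputable def LIdx (d δ : ℝ) : Finset (ℤ × ℤ) :=
  Finset.Icc 0 ⌊Real.pi / δ⌋ ×ˢ Finset.Icc 0 ⌊d / δ⌋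

lemma conj_dDir_mul (δ : ℝ) (k : ℤ × ℤ) :
    dDir δ k * (starRingEnd ℂ) (dDir δ k) = 1 := by
  rw [Complex.mul_conj]
  have : ‖dDir δ k‖ = 1 := by
    simp [dDir, Complex.norm_exp]
  rw [← Complex.sq_norm] at *
  rw [this]; norm_num

lemma dline_eq (δ : ℝ) (k : ℤ × ℤ) :
    dline δ k = {w : ℂ | (w * (starRingEnd ℂ) (dDir δ k)).im = (k.2 : ℝ) * δ} := by
  ext w
  simp only [dline, mem_setOf_eq]
  constructor
  · rintro ⟨t, rfl⟩
    have h1 := conj_dDir_mul δ k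
    rw [add_mul, mul_assoc, mul_assoc, h1]
    simp
    ring
  · intro h
    refine ⟨(w * (starRingEnd ℂ) (dDir δ k)).re, ?_⟩
    have h1 : w = (w * (starRingEnd ℂ) (dDir δ k)) * dDir δ k := by
      rw [mul_assoc, mul_comm ((starRingEnd ℂ) (dDir δ k)), conj_dDir_mul]
      ring
    have h2 : (w * (starRingEnd ℂ) (dDir δ k)) =
        ((((w * (starRingEnd ℂ) (dDir δ k)).re : ℝ) : ℂ) + (((k.2 : ℝ) * δ : ℝ) : ℂ) * Complex.I) := by
      rw [← h]
      exact (Complex.re_add_im _).symm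
    conv_lhs => rw [h1]
    rw [h2]
    simp
    ring

lemma mem_tube_iff (δ ρ : ℝ) (hρ : 0 ≤ ρ) (k : ℤ × ℤ) (w : ℂ) :
    w ∈ cthickening ρ (dline δ k) ↔ |(w * (starRingEnd ℂ) (dDir δ k)).im - (k.2 : ℝ) * δ| ≤ ρ := by
  rw [dline_eq]
  set E := dDir δ k with hE
  set S : Set ℂ := {w : ℂ | (w * (starRingEnd ℂ) E).im = (k.2 : ℝ) * δ} with hS
  constructor
  · intro hw
    rw [Metric.mem_cthickening_iff] at hw
    have hlow : ENNReal.ofReal (|(w * (starRingEnd ℂ) E).im - (k.2 : ℝ) * δ|) ≤ infEDist w S := by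
      rw [le_infEDist]
      intro z hz
      rw [edist_dist]
      apply ENNReal.ofReal_le_ofReal
      have hz' : (z * (starRingEnd ℂ) E).im = (k.2 : ℝ) * δ := hz
      have : (w * (starRingEnd ℂ) E).im - (k.2:ℝ) * δ = ((w - z) * (starRingEnd ℂ) E).im := by
        rw [sub_mul, Complex.sub_im, hz']
      rw [this, dist_eq_norm]
      calc |((w - z) * (starRingEnd ℂ) E).im| ≤ ‖(w - z) * (starRingEnd ℂ) E‖ :=
            Complex.abs_im_le_norm _
        _ = ‖w - z‖ := by
            rw [norm_mul]
            have : ‖(starRingEnd ℂ) E‖ = 1 := by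
              rw [Complex.norm_conj]; simp [hE, dDir, Complex.norm_exp]
            rw [this, mul_one]
        _ = ‖w - z‖ := rfl
    have := le_trans hlow hw
    rwa [ENNReal.ofReal_le_ofReal_iff hρ] at this
  · intro h
    set z₀ : ℂ := w - (((w * (starRingEnd ℂ) E).im - (k.2:ℝ) * δ : ℝ) : ℂ) * (Complex.I * E) with hz₀
    have hz₀S : z₀ ∈ S := by
      have : (z₀ * (starRingEnd ℂ) E) =
          w * (starRingEnd ℂ) E - (((w * (starRingEnd ℂ) E).im - (k.2:ℝ) * δ : ℝ) : ℂ) * Complex.I := by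
        rw [hz₀, sub_mul, mul_assoc, mul_assoc, conj_dDir_mul δ k]; ring
      show (z₀ * (starRingEnd ℂ) E).im = (k.2:ℝ) * δ
      rw [this]
      simp
    apply mem_cthickening_of_dist_le w z₀ ρ S hz₀S
    rw [dist_eq_norm]
    have : w - z₀ = (((w * (starRingEnd ℂ) E).im - (k.2:ℝ) * δ : ℝ) : ℂ) * (Complex.I * E) := by
      rw [hz₀]; ring
    rw [this, norm_mul, norm_mul, Complex.norm_real, Complex.norm_I]
    have hE1 : ‖E‖ = 1 := by simp [hE, dDir, Complex.norm_exp]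
    rw [hE1]
    simpa using h

-- integer window counting
lemma int_window (β a b : ℝ) (hβ : 0 < β) (hab : a ≤ b) (S : Finset ℤ)
    (hS : ∀ m ∈ S, a ≤ (m : ℝ) * β ∧ (m : ℝ) * β ≤ b) :
    (S.card : ℝ) ≤ (b - a) / β + 1 := by
  classical
  have hsub : S ⊆ Finset.Icc ⌈a / β⌉ ⌊b / β⌋ := by
    intro m hm
    obtain ⟨h1, h2⟩ := hS m hm
    rw [Finset.mem_Icc]
    constructor
    · exact Int.ceil_le.2 (by rw [div_le_iff₀ hβ] at *; linarith [(div_le_iff₀ hβ).mpr h1]; )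
    · exact Int.le_floor.2 (by rw [le_div_iff₀ hβ]; linarith)
  have hcard := Finset.card_le_card hsub
  have h2 : ((Finset.Icc ⌈a / β⌉ ⌊b / β⌋).card : ℝ) ≤ (b - a) / β + 1 := by
    rw [Int.card_Icc]
    have hle : (((⌊b / β⌋ + 1 - ⌈a / β⌉).toNat : ℤ) : ℝ) ≤ (b - a) / β + 1 := by
      rcases le_or_gt (⌊b / β⌋ + 1 - ⌈a / β⌉) 0 with h | h
      · have : ((⌊b / β⌋ + 1 - ⌈a / β⌉).toNat : ℤ) = 0 := by omega
        rw [this]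
        have : 0 ≤ (b - a) / β := div_nonneg (by linarith) hβ.le
        push_cast; linarith
      · have : ((⌊b / β⌋ + 1 - ⌈a / β⌉).toNat : ℤ) = ⌊b / β⌋ + 1 - ⌈a / β⌉ := by omega
        rw [this]
        push_cast
        have h3 : (⌊b / β⌋ : ℝ) ≤ b / β := Int.floor_le _
        have h4 : a / β ≤ (⌈a / β⌉ : ℝ) := Int.le_ceil _
        have : (b - a) / β = b / β - a / β := by ring
        linarith
    exact_mod_cast hle
  calc (S.card : ℝ) ≤ _ := by exact_mod_cast hcard
    _ ≤ _ := h2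

-- Jordan-type: if |sin u| ≤ s then u is within (π/2)s of some integer multiple of π
lemma near_multiple (u s : ℝ) (h : |Real.sin u| ≤ s) :
    ∃ m : ℤ, |u - m * Real.pi| ≤ Real.pi / 2 * s ∧ |u - m * Real.pi| ≤ Real.pi / 2 := by
  have hπ := Real.pi_pos
  set m : ℤ := round (u / Real.pi) with hm
  set v : ℝ := u - m * Real.pi with hv
  have hid : v = (u / Real.pi - m) * Real.pi := by rw [hv]; field_simp
  have hv2 : |v| ≤ Real.pi / 2 := by
    rw [hid, abs_mul, abs_of_pos hπ]
    have := abs_sub_round (u / Real.pi)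
    nlinarith
  have hsv : |Real.sin v| = |Real.sin u| := by
    have hsub : Real.sin v = Real.sin u * Real.cos (m * Real.pi) -
        Real.cos u * Real.sin (m * Real.pi) := by rw [hv, Real.sin_sub]
    rw [hsub, Real.sin_int_mul_pi, mul_zero, sub_zero, abs_mul]
    have hc : |Real.cos (m * Real.pi)| = 1 := by
      set cc := Real.cos ((m : ℝ) * Real.pi) with hcc
      have h1 : Real.sin ((m : ℝ) * Real.pi) = 0 := Real.sin_int_mul_pi m
      have h2 := Real.sin_sq_add_cos_sq ((m : ℝ) * Real.pi)
      rw [h1] at h2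
      have h3 : (|cc| - 1) * (|cc| + 1) = 0 := by nlinarith [sq_abs cc]
      rcases mul_eq_zero.mp h3 with h4 | h4
      · linarith
      · nlinarith [abs_nonneg cc]
    rw [hc, mul_one]
  have h1 : Real.sin |v| = |Real.sin v| := by
    rcases le_or_gt 0 v with hv0 | hv0
    · rw [abs_of_nonneg hv0]
      have hvle : v ≤ Real.pi := by
        have := le_abs_self v; linarith
      rw [abs_of_nonneg (Real.sin_nonneg_of_nonneg_of_le_pi hv0 hvle)]
    · rw [abs_of_neg hv0, Real.sin_neg]
      have hnv : 0 ≤ Real.sin (-v) := by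
        apply Real.sin_nonneg_of_nonneg_of_le_pi (by linarith)
        rw [abs_of_neg hv0] at hv2
        linarith
      have hsv0 : Real.sin v ≤ 0 := by
        rw [Real.sin_neg] at hnv; linarith
      exact (abs_of_nonpos hsv0).symm
  have hj : 2 / Real.pi * |v| ≤ |Real.sin u| := by
    rw [← hsv, ← h1]
    exact Real.mul_le_sin (abs_nonneg v) hv2
  have hfin : |v| ≤ Real.pi / 2 * s := by
    have h2 : 2 / Real.pi * |v| ≤ s := le_trans hj h
    calc |v| = Real.pi / 2 * (2 / Real.pi * |v|) := by field_simp
      _ ≤ Real.pi / 2 * s := mul_le_mul_of_nonneg_left h2 (by positivity)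
  exact ⟨m, hfin, hv2⟩

-- dyadic: 2^(Nat.log 2 ⌊t⌋₊) ∈ (t/2, t]
lemma log2_bounds (t : ℝ) (ht : 1 ≤ t) :
    (2 : ℝ) ^ (Nat.log 2 ⌊t⌋₊) ≤ t ∧ t < 2 ^ (Nat.log 2 ⌊t⌋₊ + 1) := by
  have hn : 1 ≤ ⌊t⌋₊ := Nat.one_le_floor_iff t |>.mpr ht
  constructor
  · calc ((2:ℝ) ^ Nat.log 2 ⌊t⌋₊) = ((2 ^ Nat.log 2 ⌊t⌋₊ : ℕ) : ℝ) := by push_cast; ring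
      _ ≤ (⌊t⌋₊ : ℝ) := by exact_mod_cast Nat.pow_log_le_self 2 (by omega)
      _ ≤ t := Nat.floor_le (by linarith)
  · have h1 : t < (⌊t⌋₊ : ℝ) + 1 := Nat.lt_floor_add_one t
    have h2 : ⌊t⌋₊ < 2 ^ (Nat.log 2 ⌊t⌋₊ + 1) := Nat.lt_pow_succ_log_self (by norm_num) _
    have h3 : (⌊t⌋₊ : ℝ) + 1 ≤ ((2 ^ (Nat.log 2 ⌊t⌋₊ + 1) : ℕ) : ℝ) := by exact_mod_cast h2
    calc t < (⌊t⌋₊ : ℝ) + 1 := h1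
      _ ≤ _ := h3
      _ = (2:ℝ) ^ (Nat.log 2 ⌊t⌋₊ + 1) := by push_cast; ring

lemma dist_le_two_of_unitSq {x y : ℂ}
    (hx : x.re ∈ Icc (0:ℝ) 1 ∧ x.im ∈ Icc (0:ℝ) 1)
    (hy : y.re ∈ Icc (0:ℝ) 1 ∧ y.im ∈ Icc (0:ℝ) 1) : dist x y ≤ 2 := by
  rw [Complex.dist_eq]
  calc ‖x - y‖ ≤ |(x - y).re| + |(x - y).im| := Complex.norm_le_abs_re_add_abs_im _
    _ ≤ 2 := by
      obtain ⟨⟨h1, h2⟩, h3, h4⟩ := hx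
      obtain ⟨⟨h5, h6⟩, h7, h8⟩ := hy
      rw [Complex.sub_re, Complex.sub_im]
      rcases abs_cases (x.re - y.re) with ⟨he, _⟩ | ⟨he, _⟩ <;>
        rcases abs_cases (x.im - y.im) with ⟨hf, _⟩ | ⟨hf, _⟩ <;> rw [he, hf] <;> linarith

open scoped Classical in
lemma pair_count (c δ d : ℝ) (hc : 1 ≤ c) (hδ : 0 < δ) (hδ1 : δ < 1) (hd : 1 ≤ d)
    (x y : ℂ) (hx : x ∈ unitSq) (hy : y ∈ unitSq) :
    (((LIdx d δ).filter (fun k => x ∈ cthickening (c * δ) (dline δ k) ∧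
        y ∈ cthickening (c * δ) (dline δ k))).card : ℝ) ≤
      78 * c ^ 2 / max (dist x y) (2 * c * δ) := by
  classical
  have hπ := Real.pi_pos
  have hcδ : (0:ℝ) ≤ c * δ := by positivity
  set T : ℤ × ℤ → Set ℂ := fun k => cthickening (c * δ) (dline δ k) with hT
  set F := (LIdx d δ).filter (fun k => x ∈ T k ∧ y ∈ T k) with hF
  set φ : ℤ → ℂ → ℝ := fun a w => (w * (starRingEnd ℂ) (Complex.exp (((a:ℝ) * δ) * Complex.I))).im with hφ
  have hmemT : ∀ (k : ℤ × ℤ) (w : ℂ), w ∈ T k ↔ |φ k.1 w - (k.2:ℝ) * δ| ≤ c * δ := by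
    intro k w
    exact mem_tube_iff δ (c*δ) hcδ k w
  set G := F.image Prod.fst with hG
  have hFL : ∀ k ∈ F, k.1 ∈ Finset.Icc (0:ℤ) ⌊Real.pi / δ⌋ ∧ k.2 ∈ Finset.Icc (0:ℤ) ⌊d / δ⌋ := by
    intro k hk
    have := Finset.mem_filter.mp hk |>.1
    rw [LIdx, Finset.mem_product] at this
    exact this
  -- fiber bound
  have hfiber : ∀ a ∈ G, ((F.filter (fun k => k.1 = a)).card : ℝ) ≤ 3 * c := by
    intro a _
    set W := (Finset.Icc (0:ℤ) ⌊d / δ⌋).filter (fun b : ℤ => |φ a x - (b:ℝ) * δ| ≤ c * δ) with hW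
    have hsub : (F.filter (fun k => k.1 = a)).card ≤ W.card := by
      apply Finset.card_le_card_of_injOn Prod.snd
      · intro k hk
        rw [Finset.mem_coe, Finset.mem_filter] at hk
        obtain ⟨hkF, hk1⟩ := hk
        rw [hW, Finset.mem_coe, Finset.mem_filter]
        refine ⟨(hFL k hkF).2, ?_⟩
        have hxT := (Finset.mem_filter.mp hkF).2.1
        rw [hmemT] at hxT
        rw [← hk1]
        exact hxT
      · intro k hk k' hk' hkk
        simp only [Finset.coe_filter, mem_setOf_eq] at hk hk'
        exact Prod.ext (hk.2.trans hk'.2.symm) hkk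
    have hWcard : (W.card : ℝ) ≤ 3 * c := by
      have h1 : (W.card : ℝ) ≤ ((φ a x + c * δ) - (φ a x - c * δ)) / δ + 1 := by
        apply int_window δ _ _ hδ (by linarith)
        intro m hm
        rw [hW, Finset.mem_filter] at hm
        have := abs_le.mp hm.2
        constructor <;> linarith [this.1, this.2]
      have h2 : ((φ a x + c * δ) - (φ a x - c * δ)) / δ + 1 = 2 * c + 1 := by
        field_simp
        ring
      rw [h2] at h1
      linarith
    calc ((F.filter (fun k => k.1 = a)).card : ℝ) ≤ (W.card : ℝ) := by exact_mod_cast hsub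
      _ ≤ 3 * c := hWcard
  have hcardF : (F.card : ℝ) ≤ (G.card : ℝ) * (3 * c) := by
    have h1 : F.card = ∑ a ∈ G, (F.filter (fun k => k.1 = a)).card :=
      Finset.card_eq_sum_card_fiberwise (fun k hk => Finset.mem_image_of_mem Prod.fst hk)
    have h2 : (F.card : ℝ) = ∑ a ∈ G, ((F.filter (fun k => k.1 = a)).card : ℝ) := by
      rw [h1]; push_cast; ring
    rw [h2]
    calc ∑ a ∈ G, ((F.filter (fun k => k.1 = a)).card : ℝ) ≤ ∑ a ∈ G, 3 * c :=
          Finset.sum_le_sum hfiber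
      _ = (G.card : ℝ) * (3 * c) := by rw [Finset.sum_const]; push_cast; ring
  rcases le_or_gt (dist x y) (2 * c * δ) with hr | hr
  · -- near case
    have hmax : max (dist x y) (2 * c * δ) = 2 * c * δ := max_eq_right hr
    rw [hmax]
    have hGcard : (G.card : ℝ) ≤ Real.pi / δ + 1 := by
      have hsub : G ⊆ Finset.Icc (0:ℤ) ⌊Real.pi / δ⌋ := by
        intro a ha
        obtain ⟨k, hk, rfl⟩ := Finset.mem_image.mp ha
        exact (hFL k hk).1
      have := Finset.card_le_card hsub
      calc (G.card : ℝ) ≤ ((Finset.Icc (0:ℤ) ⌊Real.pi / δ⌋).card : ℝ) := by exact_mod_cast this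
        _ ≤ (Real.pi - 0) / δ + 1 := by
            apply int_window δ 0 Real.pi hδ (by positivity)
            intro m hm
            rw [Finset.mem_Icc] at hm
            constructor
            · have : (0:ℝ) ≤ (m:ℝ) := by exact_mod_cast hm.1
              positivity
            · have h1 : (m : ℝ) ≤ ⌊Real.pi / δ⌋ := by exact_mod_cast hm.2
              have h2 : (⌊Real.pi / δ⌋ : ℝ) ≤ Real.pi / δ := Int.floor_le _
              exact (le_div_iff₀ hδ).mp (h1.trans h2)
        _ = Real.pi / δ + 1 := by ring
    have hπ4 : Real.pi ≤ 4 := Real.pi_le_four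
    have h5 : (G.card : ℝ) ≤ 5 / δ := by
      have : Real.pi / δ + 1 ≤ 5 / δ := by
        rw [div_add' _ _ _ (ne_of_gt hδ), div_le_div_iff₀ hδ hδ]
        nlinarith
      linarith
    calc (F.card : ℝ) ≤ (G.card : ℝ) * (3 * c) := hcardF
      _ ≤ (5 / δ) * (3 * c) := by nlinarith [hGcard, h5]
      _ ≤ 78 * c ^ 2 / (2 * c * δ) := by
          rw [div_mul_eq_mul_div, div_le_div_iff₀ hδ (by positivity)]
          nlinarith
  · -- far case
    have hr0 : 0 < dist x y := lt_trans (by positivity) hr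
    set r := dist x y with hrr
    set s := 2 * c * δ / r with hs
    have hs0 : 0 < s := by positivity
    have hs1 : s < 1 := by rw [hs, div_lt_one hr0]; exact hr
    set ψ := (x - y).arg with hψ
    clear_value ψ
    have hmax : max r (2 * c * δ) = r := max_eq_left hr.le
    rw [hmax]
    -- every a in G satisfies the sine bound
    have hGsin : ∀ a ∈ G, (0:ℝ) ≤ (a:ℝ) * δ ∧ (a:ℝ) * δ ≤ Real.pi ∧
        |Real.sin (ψ - (a:ℝ) * δ)| ≤ s := by
      intro a ha
      obtain ⟨k, hk, rfl⟩ := Finset.mem_image.mp ha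
      obtain ⟨h1, _⟩ := hFL k hk
      rw [Finset.mem_Icc] at h1
      have ha0 : (0:ℝ) ≤ (k.1:ℝ) * δ := by
        have : (0:ℝ) ≤ (k.1:ℝ) := by exact_mod_cast h1.1
        positivity
      have haπ : (k.1:ℝ) * δ ≤ Real.pi := by
        have h2 : (k.1 : ℝ) ≤ ⌊Real.pi / δ⌋ := by exact_mod_cast h1.2
        have h3 : (⌊Real.pi / δ⌋ : ℝ) ≤ Real.pi / δ := Int.floor_le _
        exact (le_div_iff₀ hδ).mp (h2.trans h3)
      refine ⟨ha0, haπ, ?_⟩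
      obtain ⟨_, hxT, hyT⟩ := Finset.mem_filter.mp hk
      rw [hmemT] at hxT hyT
      have hdiff : |φ k.1 x - φ k.1 y| ≤ 2 * c * δ := by
        have h4 : φ k.1 x - φ k.1 y = (φ k.1 x - (k.2:ℝ)*δ) - (φ k.1 y - (k.2:ℝ)*δ) := by ring
        rw [h4]
        calc |_| ≤ |φ k.1 x - (k.2:ℝ)*δ| + |φ k.1 y - (k.2:ℝ)*δ| := abs_sub _ _
          _ ≤ 2 * c * δ := by linarith
      -- φ k.1 x - φ k.1 y = r * sin (ψ - k.1 δ)
      have hkey : φ k.1 x - φ k.1 y = r * Real.sin (ψ - (k.1:ℝ) * δ) := by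
        have h5 : φ k.1 x - φ k.1 y =
            ((x - y) * (starRingEnd ℂ) (Complex.exp (((k.1:ℝ) * δ) * Complex.I))).im := by
          rw [hφ]; simp only [sub_mul, Complex.sub_im]
        rw [h5]
        have h6 : x - y = (r : ℂ) * Complex.exp ((ψ:ℝ) * Complex.I) := by
          rw [hrr, Complex.dist_eq, hψ]
          exact (Complex.norm_mul_exp_arg_mul_I (x - y)).symm
        have h7 : (starRingEnd ℂ) (Complex.exp (((k.1:ℝ) * δ) * Complex.I)) =
            Complex.exp (-((((k.1:ℝ) * δ) : ℝ) : ℂ) * Complex.I) := by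
          rw [← Complex.exp_conj]
          congr 1
          simp [Complex.conj_I]
        rw [h6, h7, mul_assoc, ← Complex.exp_add]
        have h8 : (ψ:ℝ) * Complex.I + -((((k.1:ℝ) * δ) : ℝ) : ℂ) * Complex.I =
            ((ψ - (k.1:ℝ) * δ : ℝ) : ℂ) * Complex.I := by push_cast; ring
        rw [h8, Complex.im_ofReal_mul, Complex.exp_ofReal_mul_I_im]
      rw [hkey] at hdiff
      rw [abs_mul, abs_of_pos hr0] at hdiff
      rw [hs, le_div_iff₀ hr0]
      nlinarith [abs_nonneg (Real.sin (ψ - (k.1:ℝ) * δ))]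
    -- Mset
    set Mset := Finset.Icc ⌈(ψ - 3 * Real.pi / 2) / Real.pi⌉ ⌊(ψ + Real.pi / 2) / Real.pi⌋ with hM
    have hMcard : (Mset.card : ℝ) ≤ 3 := by
      have h1 : (Mset.card : ℝ) ≤ ((ψ + Real.pi / 2) - (ψ - 3 * Real.pi / 2)) / Real.pi + 1 := by
        apply int_window Real.pi _ _ hπ (by linarith)
        intro m hm
        rw [hM, Finset.mem_Icc] at hm
        constructor
        · have := Int.ceil_le.mp (le_refl ⌈(ψ - 3 * Real.pi / 2) / Real.pi⌉)
          have h2 : ((ψ - 3 * Real.pi / 2) / Real.pi) ≤ (m:ℝ) := by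
            calc ((ψ - 3 * Real.pi / 2) / Real.pi) ≤ (⌈(ψ - 3 * Real.pi / 2) / Real.pi⌉ : ℝ) :=
                  Int.le_ceil _
              _ ≤ (m:ℝ) := by exact_mod_cast hm.1
          exact (div_le_iff₀ hπ).mp h2
        · have h2 : (m:ℝ) ≤ ((ψ + Real.pi / 2) / Real.pi) := by
            calc (m:ℝ) ≤ (⌊(ψ + Real.pi / 2) / Real.pi⌋ : ℝ) := by exact_mod_cast hm.2
              _ ≤ _ := Int.floor_le _
          exact (le_div_iff₀ hπ).mp h2
      have h2 : ((ψ + Real.pi / 2) - (ψ - 3 * Real.pi / 2)) / Real.pi + 1 = 3 := by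
        field_simp; ring
      rw [h2] at h1; exact h1
    -- G is covered by windows around multiples
    have hGsub : G ⊆ Mset.biUnion (fun m => (Finset.Icc (0:ℤ) ⌊Real.pi / δ⌋).filter
        (fun a : ℤ => |ψ - (a:ℝ) * δ - (m:ℝ) * Real.pi| ≤ Real.pi / 2 * s)) := by
      intro a ha
      obtain ⟨ha0, haπ, hsin⟩ := hGsin a ha
      obtain ⟨m, hm1, hm2⟩ := near_multiple (ψ - (a:ℝ) * δ) s hsin
      rw [Finset.mem_biUnion]
      refine ⟨m, ?_, ?_⟩
      · rw [hM, Finset.mem_Icc]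
        have hb1 : ψ - 3 * Real.pi / 2 ≤ (m:ℝ) * Real.pi := by
          have := abs_le.mp hm2
          linarith [this.1, this.2]
        have hb2 : (m:ℝ) * Real.pi ≤ ψ + Real.pi / 2 := by
          have := abs_le.mp hm2
          linarith [this.1, this.2]
        constructor
        · rw [Int.ceil_le]
          rw [div_le_iff₀ hπ]
          linarith
        · rw [Int.le_floor]
          rw [le_div_iff₀ hπ]
          linarith
      · rw [Finset.mem_filter]
        constructor
        · obtain ⟨k, hk, rfl⟩ := Finset.mem_image.mp ha
          exact (hFL k hk).1
        · exact hm1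
    have hGcard : (G.card : ℝ) ≤ 3 * (Real.pi * s / δ + 1) := by
      have h1 : G.card ≤ ∑ m ∈ Mset, ((Finset.Icc (0:ℤ) ⌊Real.pi / δ⌋).filter
          (fun a : ℤ => |ψ - (a:ℝ) * δ - (m:ℝ) * Real.pi| ≤ Real.pi / 2 * s)).card := by
        calc G.card ≤ (Mset.biUnion (fun m => (Finset.Icc (0:ℤ) ⌊Real.pi / δ⌋).filter
            (fun a : ℤ => |ψ - (a:ℝ) * δ - (m:ℝ) * Real.pi| ≤ Real.pi / 2 * s))).card :=
              Finset.card_le_card hGsub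
          _ ≤ _ := Finset.card_biUnion_le
      have h2 : ∀ m : ℤ, (((Finset.Icc (0:ℤ) ⌊Real.pi / δ⌋).filter
          (fun a : ℤ => |ψ - (a:ℝ) * δ - (m:ℝ) * Real.pi| ≤ Real.pi / 2 * s)).card : ℝ) ≤
          Real.pi * s / δ + 1 := by
        intro m
        have h3 : (((Finset.Icc (0:ℤ) ⌊Real.pi / δ⌋).filter
            (fun a : ℤ => |ψ - (a:ℝ) * δ - (m:ℝ) * Real.pi| ≤ Real.pi / 2 * s)).card : ℝ) ≤
            ((ψ - (m:ℝ) * Real.pi + Real.pi / 2 * s) - (ψ - (m:ℝ) * Real.pi - Real.pi / 2 * s)) / δ + 1 := by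
          apply int_window δ _ _ hδ (by nlinarith)
          intro a ha
          rw [Finset.mem_filter] at ha
          have := abs_le.mp ha.2
          constructor <;> linarith [this.1, this.2]
        have h4 : ((ψ - (m:ℝ) * Real.pi + Real.pi / 2 * s) - (ψ - (m:ℝ) * Real.pi - Real.pi / 2 * s)) / δ + 1
            = Real.pi * s / δ + 1 := by ring_nf
        rw [h4] at h3; exact h3
      calc (G.card : ℝ) ≤ ∑ m ∈ Mset, (((Finset.Icc (0:ℤ) ⌊Real.pi / δ⌋).filter
            (fun a : ℤ => |ψ - (a:ℝ) * δ - (m:ℝ) * Real.pi| ≤ Real.pi / 2 * s)).card : ℝ) := by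
            exact_mod_cast h1
        _ ≤ ∑ m ∈ Mset, (Real.pi * s / δ + 1) := Finset.sum_le_sum (fun m _ => h2 m)
        _ = (Mset.card : ℝ) * (Real.pi * s / δ + 1) := by rw [Finset.sum_const]; push_cast; ring
        _ ≤ 3 * (Real.pi * s / δ + 1) := by
            apply mul_le_mul_of_nonneg_right hMcard
            have : 0 < Real.pi * s / δ := by positivity
            linarith
    -- s/δ ≥ 1 since r ≤ 2 ≤ 2c
    have hr2 : r ≤ 2 := dist_le_two_of_unitSq hx hy
    have hsδ' : δ ≤ s := by
      rw [hs, le_div_iff₀ hr0]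
      nlinarith
    have hsδ : 1 ≤ s / δ := (one_le_div hδ).mpr hsδ'
    have hπ315 : Real.pi ≤ 3.15 := by linarith [Real.pi_lt_d2]
    have hGfin : (G.card : ℝ) ≤ 13 * (s / δ) := by
      have h1 : Real.pi * s / δ + 1 ≤ 3.15 * (s / δ) + (s / δ) := by
        have h2 : Real.pi * s / δ ≤ 3.15 * (s / δ) := by
          rw [mul_div_assoc]
          apply mul_le_mul_of_nonneg_right hπ315 (by positivity)
        linarith
      calc (G.card : ℝ) ≤ 3 * (Real.pi * s / δ + 1) := hGcard
        _ ≤ 3 * (3.15 * (s / δ) + (s / δ)) := by linarith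
        _ ≤ 13 * (s / δ) := by linarith
    calc (F.card : ℝ) ≤ (G.card : ℝ) * (3 * c) := hcardF
      _ ≤ 13 * (s / δ) * (3 * c) := by
          apply mul_le_mul_of_nonneg_right hGfin (by positivity)
      _ = 39 * c * s / δ := by ring
      _ = 78 * c ^ 2 / r := by
          rw [hs]
          field_simp
          ring

open scoped Classical in
lemma ncard_inter_eq (A : Set ℂ) (hA : A.Finite) (S : Set ℂ) :
    (A ∩ S).ncard = (hA.toFinset.filter (fun a => a ∈ S)).card := by
  rw [← Set.ncard_coe_finset]
  congr 1
  ext a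
  simp [Set.Finite.mem_toFinset]

set_option maxHeartbeats 1000000 in
lemma twenty_le_ncard (α C₀ δ : ℝ) (hC₀ : 0 < C₀) (hδ : 0 < δ) (A : Set ℂ)
    (hDU : DiscUnconc α C₀ δ A) : 20 ≤ (A.ncard : ℝ) := by
  obtain ⟨hfin, _, hNlo, _, _, hline⟩ := hDU
  have hN0 : 0 < A.ncard := by
    rw [Set.ncard_pos hfin]
    by_contra h
    rw [Set.not_nonempty_iff_eq_empty] at h
    rw [h] at hNlo
    simp only [Set.ncard_empty, Nat.cast_zero] at hNlo
    have : 0 < C₀⁻¹ * δ ^ (-α) := by positivity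
    linarith
  -- first: N ≥ 10
  obtain ⟨x, hx⟩ := (Set.ncard_pos hfin).mp hN0
  have h10 : 10 ≤ (A.ncard : ℝ) := by
    set ℓ : Set ℂ := {w : ℂ | ∃ t : ℝ, w = x + t • (1:ℂ)} with hℓ
    have hIsLine : IsLine ℓ := ⟨x, 1, one_ne_zero, rfl⟩
    have hxl : x ∈ ℓ := ⟨0, by simp⟩
    have hxth : x ∈ cthickening C₀⁻¹ ℓ :=
      mem_cthickening_of_dist_le x x _ _ hxl (by simp [dist_self]; positivity)
    have hsub : {x} ⊆ A ∩ cthickening C₀⁻¹ ℓ := by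
      intro z hz; rw [Set.mem_singleton_iff] at hz; subst hz; exact ⟨hx, hxth⟩
    have h1 : 1 ≤ (A ∩ cthickening C₀⁻¹ ℓ).ncard := by
      have := Set.ncard_le_ncard hsub (hfin.inter_of_left _)
      simpa using this
    have h2 := hline ℓ hIsLine
    have : (1:ℝ) ≤ (A.ncard : ℝ) / 10 := le_trans (by exact_mod_cast h1) h2
    linarith
  -- N ≥ 2 gives two distinct points
  have h2N : 1 < A.ncard := by
    have : (10:ℝ) ≤ (A.ncard:ℝ) := h10
    exact_mod_cast lt_of_lt_of_le (by norm_num : (1:ℝ) < 10) this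
  obtain ⟨u, hu, v, hv, huv⟩ := (Set.one_lt_ncard hfin).mp h2N
  set ℓ : Set ℂ := {w : ℂ | ∃ t : ℝ, w = u + t • (v - u)} with hℓ
  have hIsLine : IsLine ℓ := ⟨u, v - u, sub_ne_zero.mpr (Ne.symm huv), rfl⟩
  have hul : u ∈ ℓ := ⟨0, by simp⟩
  have hvl : v ∈ ℓ := ⟨1, by simp⟩
  have hsub : {u, v} ⊆ A ∩ cthickening C₀⁻¹ ℓ := by
    intro z hz
    rcases hz with hz | hz
    · rw [hz]
      exact ⟨hu, mem_cthickening_of_dist_le u u _ _ hul (by simp [dist_self]; positivity)⟩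
    · rw [Set.mem_singleton_iff] at hz
      rw [hz]
      exact ⟨hv, mem_cthickening_of_dist_le v v _ _ hvl (by simp [dist_self]; positivity)⟩
  have h2 : 2 ≤ (A ∩ cthickening C₀⁻¹ ℓ).ncard := by
    have hcard := Set.ncard_le_ncard hsub (hfin.inter_of_left _)
    rwa [Set.ncard_pair huv] at hcard
  have h3 := hline ℓ hIsLine
  have : (2:ℝ) ≤ (A.ncard : ℝ) / 10 := le_trans (by exact_mod_cast h2) h3
  linarith

lemma packing_bound (δ : ℝ) (hδ : 0 < δ) (hδ1 : δ < 1) (A : Set ℂ) (hfin : A.Finite)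
    (hAsq : A ⊆ unitSq) (hsep : ∀ x ∈ A, ∀ y ∈ A, x ≠ y → δ ≤ dist x y) :
    (A.ncard : ℝ) ≤ 9 / δ ^ 2 := by
  classical
  set f : ℂ → ℤ × ℤ := fun z => (⌊2 * z.re / δ⌋, ⌊2 * z.im / δ⌋) with hf
  have hinj : Set.InjOn f A := by
    intro a ha b hb hab
    by_contra hne
    have hsep' := hsep a ha b hb hne
    rw [hf, Prod.ext_iff] at hab
    have h1 : |2 * a.re / δ - 2 * b.re / δ| < 1 := Int.abs_sub_lt_one_of_floor_eq_floor hab.1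
    have h2 : |2 * a.im / δ - 2 * b.im / δ| < 1 := Int.abs_sub_lt_one_of_floor_eq_floor hab.2
    have h2δ : (0:ℝ) < 2 / δ := by positivity
    have h3 : |a.re - b.re| < δ / 2 := by
      have heq : 2 * a.re / δ - 2 * b.re / δ = (a.re - b.re) * (2 / δ) := by ring
      rw [heq, abs_mul, abs_of_pos h2δ, mul_comm, ← lt_div_iff₀' h2δ, one_div_div] at h1
      exact h1
    have h4 : |a.im - b.im| < δ / 2 := by
      have heq : 2 * a.im / δ - 2 * b.im / δ = (a.im - b.im) * (2 / δ) := by ring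
      rw [heq, abs_mul, abs_of_pos h2δ, mul_comm, ← lt_div_iff₀' h2δ, one_div_div] at h2
      exact h2
    have h5 : dist a b < δ := by
      rw [Complex.dist_eq, Complex.norm_def]
      have h6 : Complex.normSq (a - b) < δ ^ 2 := by
        rw [Complex.normSq_apply]
        simp only [Complex.sub_re, Complex.sub_im]
        nlinarith [abs_nonneg (a.re - b.re), abs_nonneg (a.im - b.im), sq_abs (a.re - b.re),
          sq_abs (a.im - b.im)]
      calc Real.sqrt (Complex.normSq (a - b)) < Real.sqrt (δ ^ 2) := by
            apply Real.sqrt_lt_sqrt (Complex.normSq_nonneg _) h6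
        _ = δ := by rw [Real.sqrt_sq hδ.le]
    linarith
  set S := Finset.Icc (0:ℤ) ⌊2/δ⌋ ×ˢ Finset.Icc (0:ℤ) ⌊2/δ⌋ with hS
  have hmaps : f '' A ⊆ ↑S := by
    rintro _ ⟨a, ha, rfl⟩
    obtain ⟨⟨h1, h2⟩, h3, h4⟩ := hAsq ha
    rw [hS]
    simp only [Finset.coe_product, Set.mem_prod, Finset.mem_coe, Finset.mem_Icc]
    have key : ∀ t : ℝ, 0 ≤ t → t ≤ 1 → 0 ≤ ⌊2 * t / δ⌋ ∧ ⌊2 * t / δ⌋ ≤ ⌊2/δ⌋ := by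
      intro t ht0 ht1
      exact ⟨Int.floor_nonneg.mpr (by positivity),
        Int.floor_le_floor ((div_le_div_iff_of_pos_right hδ).mpr (by linarith))⟩
    exact ⟨key a.re h1 h2, key a.im h3 h4⟩
  have hcard : (A.ncard : ℝ) ≤ (S.card : ℝ) := by
    rw [← Set.ncard_image_of_injOn hinj]
    have := Set.ncard_le_ncard hmaps S.finite_toSet
    rw [Set.ncard_coe_finset] at this
    exact_mod_cast this
  have hScard : (S.card : ℝ) ≤ 9 / δ ^ 2 := by
    rw [hS, Finset.card_product, Int.card_Icc]
    have h0 : (0:ℤ) ≤ ⌊2/δ⌋ := Int.floor_nonneg.mpr (by positivity)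
    have hh : (0:ℤ) ≤ ⌊2/δ⌋ + 1 := by omega
    have h1 : ((⌊2/δ⌋ + 1 - 0).toNat : ℝ) = (⌊2/δ⌋ : ℝ) + 1 := by
      rw [sub_zero]
      have h2 : ((⌊2/δ⌋ + 1).toNat : ℤ) = ⌊2/δ⌋ + 1 := Int.toNat_of_nonneg hh
      calc ((⌊2/δ⌋ + 1).toNat : ℝ) = (((⌊2/δ⌋ + 1).toNat : ℤ) : ℝ) := by push_cast; ring
        _ = (⌊2/δ⌋ : ℝ) + 1 := by rw [h2]; push_cast; ring
    have h2 : (⌊2/δ⌋ : ℝ) + 1 ≤ 3 / δ := by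
      have h3 : (⌊2/δ⌋ : ℝ) ≤ 2/δ := Int.floor_le _
      have h4 : (1:ℝ) ≤ 1/δ := by rw [le_div_iff₀ hδ]; linarith
      have : (2:ℝ)/δ + 1/δ = 3/δ := by ring
      linarith
    push_cast
    rw [h1]
    calc ((⌊2/δ⌋:ℝ) + 1) * ((⌊2/δ⌋:ℝ) + 1) ≤ (3/δ) * (3/δ) := by
          have h5 : (0:ℝ) ≤ (⌊2/δ⌋:ℝ) + 1 := by positivity
          nlinarith
      _ = 9 / δ ^ 2 := by field_simp; ring
  linarith

lemma log_quarter (δ : ℝ) (hδ : 0 < δ) (hδ1 : δ < 1) (hsmall : δ^2 ≤ 9/20) :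
    1/4 ≤ |Real.log δ| := by
  have hδ67 : δ ≤ 0.671 := by nlinarith
  have hlogneg : Real.log δ < 0 := Real.log_neg hδ hδ1
  rw [abs_of_neg hlogneg]
  have hE : Real.exp (1/4) ≤ 1.29 := by
    set E := Real.exp (1/4) with hEdef
    have hE0 : 0 < E := Real.exp_pos _
    have hE4 : E^(4:ℕ) = Real.exp 1 := by
      rw [hEdef, ← Real.exp_nat_mul]
      norm_num
    have h1 : Real.exp 1 < 2.7182818286 := Real.exp_one_lt_d9
    have h2 : E^2 ≤ 1.65 := by nlinarith [sq_nonneg (E^2 - 1.65), sq_nonneg E]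
    nlinarith [sq_nonneg (E - 1.29)]
  have hd : δ ≤ Real.exp (-(1/4)) := by
    rw [Real.exp_neg]
    have hE0 : 0 < Real.exp (1/4) := Real.exp_pos _
    have hprod : δ * Real.exp (1/4) ≤ 1 := by nlinarith
    rw [inv_eq_one_div, le_div_iff₀ hE0]
    exact hprod
  have hlog : Real.log δ ≤ -(1/4) := by
    calc Real.log δ ≤ Real.log (Real.exp (-(1/4))) := Real.log_le_log hδ hd
      _ = -(1/4) := Real.log_exp _
  linarith

lemma LIdx_card_ge (d δ : ℝ) (hδ : 0 < δ) (hd : 1 ≤ d) :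
    δ⁻¹ * δ⁻¹ ≤ ((LIdx d δ).card : ℝ) := by
  have hπ := Real.pi_pos
  have key : ∀ t : ℝ, 1 ≤ t → δ⁻¹ ≤ ((Finset.Icc (0:ℤ) ⌊t / δ⌋).card : ℝ) := by
    intro t ht
    have h1 : (0:ℝ) < t / δ := by positivity
    have h0 : (0:ℤ) ≤ ⌊t / δ⌋ := Int.floor_nonneg.mpr h1.le
    rw [Int.card_Icc, sub_zero]
    have h2 : ((⌊t / δ⌋ + 1).toNat : ℝ) = (⌊t / δ⌋ : ℝ) + 1 := by
      have h3 : ((⌊t / δ⌋ + 1).toNat : ℤ) = ⌊t / δ⌋ + 1 := Int.toNat_of_nonneg (by omega)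
      calc ((⌊t / δ⌋ + 1).toNat : ℝ) = (((⌊t / δ⌋ + 1).toNat : ℤ) : ℝ) := by push_cast; ring
        _ = (⌊t / δ⌋ : ℝ) + 1 := by rw [h3]; push_cast; ring
    rw [h2]
    have h4 : t / δ < (⌊t / δ⌋ : ℝ) + 1 := Int.lt_floor_add_one _
    have h5 : δ⁻¹ ≤ t / δ := by
      rw [div_eq_mul_inv]
      nlinarith [inv_pos.mpr hδ]
    linarith
  have h1 := key Real.pi (by linarith [Real.pi_gt_three])
  have h2 := key d hd
  rw [LIdx, Finset.card_product]
  push_cast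
  have hp : (0:ℝ) < δ⁻¹ := inv_pos.mpr hδ
  nlinarith

open scoped Classical in
lemma dyadic_sum (c δ α C₀ : ℝ) (hc : 1 ≤ c) (hδ : 0 < δ) (hδ1 : δ < 1)
    (hα0 : 0 < α) (hα1 : α ≤ 1) (hC₀ : 0 < C₀)
    (A : Set ℂ) (hfin : A.Finite) (hAsq : A ⊆ unitSq)
    (hball : ∀ (z : ℂ) (r : ℝ), δ ≤ r →
      ((A ∩ closedBall z r).ncard : ℝ) ≤ C₀ * r ^ α * (A.ncard : ℝ))
    (x : ℂ) (hx : x ∈ unitSq) :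
    ∑ y ∈ hfin.toFinset, 1 / max (dist x y) (2 * c * δ) ≤
      ((Nat.log 2 ⌊1/(c*δ)⌋₊ + 1 : ℕ) : ℝ) * (2 * C₀ * (A.ncard : ℝ) * δ ^ (α - 1)) := by
  set J : ℕ := Nat.log 2 ⌊1/(c*δ)⌋₊ with hJ
  set N : ℝ := (A.ncard : ℝ) with hN
  have hN0 : 0 ≤ N := Nat.cast_nonneg _
  -- properties of J
  have hJprop : (2:ℝ)^J ≤ 1/δ ∧ 1 ≤ 2*c*δ*2^J ∧ δ ≤ 2/(2:ℝ)^J := by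
    rcases le_or_gt (c*δ) 1 with hcδ | hcδ
    · have ht : (1:ℝ) ≤ 1/(c*δ) := by
        rw [le_div_iff₀ (by positivity)]; linarith
      obtain ⟨hl, hr⟩ := log2_bounds (1/(c*δ)) ht
      rw [← hJ] at hl hr
      have hcδ0 : (0:ℝ) < c*δ := by positivity
      have h1 : (2:ℝ)^J * (c*δ) ≤ 1 := by
        rw [← le_div_iff₀ hcδ0]; exact hl
      refine ⟨?_, ?_, ?_⟩
      · calc (2:ℝ)^J ≤ 1/(c*δ) := hl
          _ ≤ 1/δ := by
            apply div_le_div_of_nonneg_left (by norm_num) hδ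
            nlinarith
      · have h2 : 1/(c*δ) < 2^(J+1) := hr
        rw [pow_succ] at h2
        rw [div_lt_iff₀ hcδ0] at h2
        nlinarith [pow_pos (by norm_num : (0:ℝ) < 2) J]
      · rw [le_div_iff₀ (pow_pos (by norm_num : (0:ℝ) < 2) J)]
        nlinarith
    · have hfloor : ⌊1/(c*δ)⌋₊ = 0 := by
        rw [Nat.floor_eq_zero]
        rw [div_lt_one (by positivity)]
        linarith
      have hJ0 : J = 0 := by rw [hJ, hfloor]; simp
      rw [hJ0]
      refine ⟨?_, ?_, ?_⟩
      · simp only [pow_zero]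
        rw [le_div_iff₀ hδ]; nlinarith
      · simp only [pow_zero, mul_one]; nlinarith
      · simp only [pow_zero]; linarith
  obtain ⟨hJle, hJge, hRJ⟩ := hJprop
  -- the key pointwise bound
  have hpoint : ∀ y ∈ hfin.toFinset, 1 / max (dist x y) (2*c*δ) ≤
      ∑ j ∈ Finset.range (J+1), (2:ℝ)^j * (if dist y x ≤ 2/(2:ℝ)^j then 1 else 0) := by
    intro y hy
    rw [Set.Finite.mem_toFinset] at hy
    have hyx2 : dist y x ≤ 2 := dist_le_two_of_unitSq (hAsq hy) hx
    have hgood : ∃ j ≤ J, 1 / max (dist x y) (2*c*δ) ≤ (2:ℝ)^j ∧ dist y x ≤ 2/(2:ℝ)^j := by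
      rcases le_or_gt (dist y x) (2/(2:ℝ)^J) with hcase | hcase
      · refine ⟨J, le_refl _, ?_, hcase⟩
        have hmax : 2*c*δ ≤ max (dist x y) (2*c*δ) := le_max_right _ _
        have hmax0 : 0 < max (dist x y) (2*c*δ) := lt_of_lt_of_le (by positivity) hmax
        rw [div_le_iff₀ hmax0]
        calc (1:ℝ) ≤ 2*c*δ*2^J := hJge
          _ ≤ (2:ℝ)^J * max (dist x y) (2*c*δ) := by
            rw [mul_comm ((2:ℝ)^J)]
            apply mul_le_mul_of_nonneg_right hmax (by positivity)
      · have hd0 : 0 < dist y x := lt_trans (by positivity) hcase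
        have ht : (1:ℝ) ≤ 2 / dist y x := by
          rw [le_div_iff₀ hd0]; linarith
        set j : ℕ := Nat.log 2 ⌊2 / dist y x⌋₊ with hj
        obtain ⟨hl, hr⟩ := log2_bounds (2 / dist y x) ht
        rw [← hj] at hl hr
        have hjJ : j ≤ J := by
          have h1 : (2:ℝ)^j ≤ 2 / dist y x := hl
          have h2 : 2 / dist y x < (2:ℝ)^J := by
            rw [div_lt_iff₀ hd0]
            rw [div_lt_iff₀ (pow_pos (by norm_num : (0:ℝ) < 2) J)] at hcase
            linarith [hcase]
          have h3 : (2:ℝ)^j < (2:ℝ)^J := lt_of_le_of_lt h1 h2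
          exact le_of_lt (by exact_mod_cast (pow_lt_pow_iff_right₀ (by norm_num : (1:ℝ) < 2)).mp h3)
        refine ⟨j, hjJ, ?_, ?_⟩
        · have hmax : dist x y ≤ max (dist x y) (2*c*δ) := le_max_left _ _
          have hmax0 : 0 < max (dist x y) (2*c*δ) :=
            lt_of_lt_of_le (by positivity) (le_max_right _ _)
          rw [div_le_iff₀ hmax0]
          have hdxy : dist x y = dist y x := dist_comm x y
          have h4 : 2 / dist y x < 2^(j+1) := hr
          rw [div_lt_iff₀ hd0, pow_succ] at h4
          have h5 : 1 ≤ (2:ℝ)^j * dist y x := by nlinarith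
          calc (1:ℝ) ≤ (2:ℝ)^j * dist y x := h5
            _ ≤ (2:ℝ)^j * max (dist x y) (2*c*δ) := by
                apply mul_le_mul_of_nonneg_left _ (by positivity)
                rw [hdxy] at hmax ⊢
                exact le_max_left _ _
        · rw [le_div_iff₀ (pow_pos (by norm_num : (0:ℝ) < 2) j), mul_comm]
          exact (le_div_iff₀ hd0).mp hl
    obtain ⟨j, hjJ, hbound, hdist⟩ := hgood
    have hterm : (2:ℝ)^j * (if dist y x ≤ 2/(2:ℝ)^j then 1 else 0) = (2:ℝ)^j := by
      rw [if_pos hdist, mul_one]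
    calc 1 / max (dist x y) (2*c*δ) ≤ (2:ℝ)^j := hbound
      _ = (2:ℝ)^j * (if dist y x ≤ 2/(2:ℝ)^j then 1 else 0) := hterm.symm
      _ ≤ ∑ j' ∈ Finset.range (J+1), (2:ℝ)^j' * (if dist y x ≤ 2/(2:ℝ)^j' then 1 else 0) := by
          apply Finset.single_le_sum (f := fun j' => (2:ℝ)^j' * (if dist y x ≤ 2/(2:ℝ)^j' then 1 else 0))
          · intro i _
            positivity
          · rw [Finset.mem_range]; omega
  -- sum over y
  calc ∑ y ∈ hfin.toFinset, 1 / max (dist x y) (2*c*δ)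
      ≤ ∑ y ∈ hfin.toFinset, ∑ j ∈ Finset.range (J+1),
          (2:ℝ)^j * (if dist y x ≤ 2/(2:ℝ)^j then 1 else 0) := Finset.sum_le_sum hpoint
    _ = ∑ j ∈ Finset.range (J+1), (2:ℝ)^j *
          ∑ y ∈ hfin.toFinset, (if dist y x ≤ 2/(2:ℝ)^j then 1 else 0) := by
        rw [Finset.sum_comm]
        apply Finset.sum_congr rfl
        intro j _
        rw [Finset.mul_sum]
    _ ≤ ∑ j ∈ Finset.range (J+1), 2 * C₀ * N * δ ^ (α - 1) := by
        apply Finset.sum_le_sum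
        intro j hj
        rw [Finset.mem_range] at hj
        have hjJ : j ≤ J := by omega
        have h2j : (0:ℝ) < (2:ℝ)^j := pow_pos (by norm_num) j
        have h2J : (0:ℝ) < (2:ℝ)^J := pow_pos (by norm_num) J
        have hRj : δ ≤ 2/(2:ℝ)^j := by
          calc δ ≤ 2/(2:ℝ)^J := hRJ
            _ ≤ 2/(2:ℝ)^j := by
              apply div_le_div_of_nonneg_left (by norm_num) h2j
              exact pow_le_pow_right₀ (by norm_num) hjJ
        have hsum : ∑ y ∈ hfin.toFinset, (if dist y x ≤ 2/(2:ℝ)^j then (1:ℝ) else 0) =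
            ((A ∩ closedBall x (2/(2:ℝ)^j)).ncard : ℝ) := by
          rw [ncard_inter_eq A hfin, Finset.sum_boole]
          congr 1
        rw [hsum]
        have hballj := hball x (2/(2:ℝ)^j) hRj
        calc (2:ℝ)^j * ((A ∩ closedBall x (2/(2:ℝ)^j)).ncard : ℝ)
            ≤ (2:ℝ)^j * (C₀ * (2/(2:ℝ)^j) ^ α * N) := by
              apply mul_le_mul_of_nonneg_left hballj h2j.le
          _ ≤ 2 * C₀ * N * δ ^ (α - 1) := by
              have hkey : (2:ℝ)^j * (2/(2:ℝ)^j) ^ α ≤ 2 * δ ^ (α - 1) := by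
                rw [Real.div_rpow (by norm_num) (le_of_lt h2j)]
                have e1 : (2:ℝ)^j * ((2:ℝ)^α / ((2:ℝ)^j)^α) =
                    (2:ℝ)^α * (((2:ℝ)^j) ^ ((1:ℝ) - α)) := by
                  rw [Real.rpow_sub h2j, Real.rpow_one]
                  field_simp
                rw [e1]
                have h2α : (2:ℝ)^α ≤ 2 := by
                  calc (2:ℝ)^α ≤ (2:ℝ)^(1:ℝ) :=
                        Real.rpow_le_rpow_of_exponent_le (by norm_num) hα1
                    _ = 2 := Real.rpow_one 2
                have hmono : ((2:ℝ)^j) ^ ((1:ℝ) - α) ≤ (1/δ) ^ ((1:ℝ) - α) := by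
                  apply Real.rpow_le_rpow h2j.le _ (by linarith)
                  calc ((2:ℝ)^j) ≤ (2:ℝ)^J := pow_le_pow_right₀ (by norm_num) hjJ
                    _ ≤ 1/δ := hJle
                have hinv : (1/δ) ^ ((1:ℝ) - α) = δ ^ (α - 1) := by
                  rw [one_div, Real.inv_rpow hδ.le, ← Real.rpow_neg hδ.le]
                  congr 1
                  ring
                rw [hinv] at hmono
                have hp1 : (0:ℝ) ≤ ((2:ℝ)^j) ^ ((1:ℝ) - α) := Real.rpow_nonneg h2j.le _
                have hp2 : (0:ℝ) ≤ δ ^ (α - 1) := Real.rpow_nonneg hδ.le _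
                have hp3 : (0:ℝ) ≤ (2:ℝ)^α := Real.rpow_nonneg (by norm_num) _
                nlinarith
              calc (2:ℝ)^j * (C₀ * (2/(2:ℝ)^j) ^ α * N) =
                    ((2:ℝ)^j * (2/(2:ℝ)^j) ^ α) * (C₀ * N) := by ring
                _ ≤ (2 * δ ^ (α - 1)) * (C₀ * N) := by
                    apply mul_le_mul_of_nonneg_right hkey (by positivity)
                _ = 2 * C₀ * N * δ ^ (α - 1) := by ring
    _ = ((J + 1 : ℕ) : ℝ) * (2 * C₀ * N * δ ^ (α - 1)) := by
        rw [Finset.sum_const, Finset.card_range]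
        push_cast
        ring

lemma pow_J_le (c δ : ℝ) (hc : 1 ≤ c) (hδ : 0 < δ) (hδ1 : δ < 1) :
    (2:ℝ) ^ (Nat.log 2 ⌊1/(c*δ)⌋₊) ≤ 1/δ := by
  rcases le_or_gt (c*δ) 1 with hcδ | hcδ
  · have ht : (1:ℝ) ≤ 1/(c*δ) := by
      rw [le_div_iff₀ (by positivity)]; linarith
    calc (2:ℝ) ^ (Nat.log 2 ⌊1/(c*δ)⌋₊) ≤ 1/(c*δ) := (log2_bounds _ ht).1
      _ ≤ 1/δ := by
        apply div_le_div_of_nonneg_left (by norm_num) hδ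
        nlinarith
  · have hfloor : ⌊1/(c*δ)⌋₊ = 0 := by
      rw [Nat.floor_eq_zero]
      rw [div_lt_one (by positivity)]
      linarith
    rw [hfloor]
    simp only [Nat.log_zero_right, pow_zero]
    rw [le_div_iff₀ hδ]
    linarith


/-- `L²` bound on the projection counting function `f_δ(ℓ) = #(A ∩ ℓ^{cδ})`:
`‖f_δ‖₂² ≲ |log δ|^M δ^{1-α}`. -/
theorem stmt8 (c d α C₀ : ℝ) (hc : 1 ≤ c) (hd : 1 ≤ d)
    (hα0 : 0 < α) (hα1 : α ≤ 1) (hC₀ : 0 < C₀) :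
    ∃ C M : ℝ, 0 < C ∧ 0 < M ∧
      ∀ (δ : ℝ) (A : Set ℂ), 0 < δ → δ < 1 → A ⊆ unitSq → DiscUnconc α C₀ δ A →
        (1 / ((LIdx d δ).card : ℝ)) *
            ∑ k ∈ LIdx d δ, (((A ∩ cthickening (c * δ) (dline δ k)).ncard : ℝ)) ^ 2 ≤
          C * |Real.log δ| ^ M * δ ^ (1 - α) := by
  classical
  refine ⟨936 * c^2 * C₀^3, 1, by positivity, one_pos, ?_⟩
  intro δ A hδ hδ1 hAsq hDU
  have hDU' := hDU
  obtain ⟨hfin, hsep, hNlo, hNhi, hball, hline⟩ := hDU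
  set A' := hfin.toFinset with hA'
  set N : ℝ := (A.ncard : ℝ) with hN
  have hN0 : (0:ℝ) ≤ N := Nat.cast_nonneg _
  have hN20 : 20 ≤ N := twenty_le_ncard α C₀ δ hC₀ hδ A hDU'
  have hN9 : N ≤ 9/δ^2 := packing_bound δ hδ hδ1 A hfin hAsq hsep
  have hδsmall : δ^2 ≤ 9/20 := by
    have h1 : (20:ℝ) ≤ 9/δ^2 := le_trans hN20 hN9
    rw [le_div_iff₀ (by positivity)] at h1
    linarith
  have hlog : 1/4 ≤ |Real.log δ| := log_quarter δ hδ hδ1 hδsmall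
  set J : ℕ := Nat.log 2 ⌊1/(c*δ)⌋₊ with hJdef
  set T : ℤ × ℤ → Set ℂ := fun k => cthickening (c * δ) (dline δ k) with hT
  -- double counting
  have hdc : ∑ k ∈ LIdx d δ, ((A'.filter (fun a => a ∈ T k)).card)^2 =
      ∑ x ∈ A', ∑ y ∈ A', ((LIdx d δ).filter (fun k => x ∈ T k ∧ y ∈ T k)).card := by
    have h1 : ∀ k : ℤ × ℤ, ((A'.filter (fun a => a ∈ T k)).card)^2 =
        ∑ x ∈ A', ∑ y ∈ A', (if x ∈ T k ∧ y ∈ T k then 1 else 0) := by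
      intro k
      rw [Finset.card_filter, sq, Finset.sum_mul_sum]
      apply Finset.sum_congr rfl
      intro x _
      apply Finset.sum_congr rfl
      intro y _
      by_cases hx : x ∈ T k <;> by_cases hy : y ∈ T k <;> simp [hx, hy]
    calc ∑ k ∈ LIdx d δ, ((A'.filter (fun a => a ∈ T k)).card)^2
        = ∑ k ∈ LIdx d δ, ∑ x ∈ A', ∑ y ∈ A', (if x ∈ T k ∧ y ∈ T k then 1 else 0) :=
          Finset.sum_congr rfl (fun k _ => h1 k)
      _ = ∑ x ∈ A', ∑ k ∈ LIdx d δ, ∑ y ∈ A', (if x ∈ T k ∧ y ∈ T k then 1 else 0) :=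
          Finset.sum_comm
      _ = ∑ x ∈ A', ∑ y ∈ A', ∑ k ∈ LIdx d δ, (if x ∈ T k ∧ y ∈ T k then 1 else 0) :=
          Finset.sum_congr rfl (fun x _ => Finset.sum_comm)
      _ = ∑ x ∈ A', ∑ y ∈ A', ((LIdx d δ).filter (fun k => x ∈ T k ∧ y ∈ T k)).card :=
          Finset.sum_congr rfl (fun x _ => Finset.sum_congr rfl
            (fun y _ => (Finset.card_filter _ _).symm))
  -- main sum bound over reals
  have hmain : (∑ k ∈ LIdx d δ, (((A ∩ T k).ncard : ℝ))^2) ≤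
      156 * c^2 * C₀ * ((J:ℝ)+1) * N^2 * δ^(α-1) := by
    have hcast : (∑ k ∈ LIdx d δ, (((A ∩ T k).ncard : ℝ))^2) =
        ((∑ k ∈ LIdx d δ, ((A'.filter (fun a => a ∈ T k)).card)^2 : ℕ) : ℝ) := by
      push_cast
      apply Finset.sum_congr rfl
      intro k _
      rw [ncard_inter_eq A hfin]
    rw [hcast, hdc]
    push_cast
    have hA'mem : ∀ z ∈ A', z ∈ A := by
      intro z hz; rwa [hA', Set.Finite.mem_toFinset] at hz
    calc ∑ x ∈ A', ∑ y ∈ A', (((LIdx d δ).filter (fun k => x ∈ T k ∧ y ∈ T k)).card : ℝ)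
        ≤ ∑ x ∈ A', ∑ y ∈ A', 78 * c^2 / max (dist x y) (2*c*δ) := by
          apply Finset.sum_le_sum
          intro x hx
          apply Finset.sum_le_sum
          intro y hy
          exact pair_count c δ d hc hδ hδ1 hd x y (hAsq (hA'mem x hx)) (hAsq (hA'mem y hy))
      _ = ∑ x ∈ A', 78 * c^2 * ∑ y ∈ A', 1 / max (dist x y) (2*c*δ) := by
          apply Finset.sum_congr rfl
          intro x _
          rw [Finset.mul_sum]
          apply Finset.sum_congr rfl
          intro y _
          rw [mul_one_div]
      _ ≤ ∑ x ∈ A', 78 * c^2 * (((J:ℝ)+1) * (2 * C₀ * N * δ^(α-1))) := by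
          apply Finset.sum_le_sum
          intro x hx
          apply mul_le_mul_of_nonneg_left _ (by positivity)
          have hds := dyadic_sum c δ α C₀ hc hδ hδ1 hα0 hα1 hC₀ A hfin hAsq hball x
            (hAsq (hA'mem x hx))
          push_cast at hds
          exact hds
      _ = (A'.card : ℝ) * (78 * c^2 * (((J:ℝ)+1) * (2 * C₀ * N * δ^(α-1)))) := by
          rw [Finset.sum_const, nsmul_eq_mul]
      _ = 156 * c^2 * C₀ * ((J:ℝ)+1) * N^2 * δ^(α-1) := by
          have hNA' : (A'.card : ℝ) = N := by
            rw [hN, hA', ← Set.ncard_coe_finset hfin.toFinset, Set.Finite.coe_toFinset]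
          rw [hNA']
          push_cast
          ring
  -- J + 1 ≤ 6 |log δ|
  have hJbound : ((J:ℝ)+1) ≤ 6 * |Real.log δ| := by
    have hlog2 : (0.6931471803:ℝ) < Real.log 2 := Real.log_two_gt_d9
    have h2J : (2:ℝ)^J ≤ 1/δ := pow_J_le c δ hc hδ hδ1
    have h3 : Real.log ((2:ℝ)^J) ≤ Real.log (1/δ) :=
      Real.log_le_log (pow_pos (by norm_num) J) h2J
    rw [Real.log_pow, one_div, Real.log_inv] at h3
    have hlogneg : Real.log δ < 0 := Real.log_neg hδ hδ1
    rw [abs_of_neg hlogneg]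
    have hJnn : (0:ℝ) ≤ (J:ℝ) := Nat.cast_nonneg _
    have h4 : (J:ℝ) * 0.6931471803 ≤ -Real.log δ := by nlinarith
    have h5 : (J:ℝ) ≤ 2 * (-Real.log δ) := by nlinarith
    have h6 : (1:ℝ) ≤ 4 * (-Real.log δ) := by
      rw [abs_of_neg hlogneg] at hlog; linarith
    push_cast
    linarith
  -- cardinality of LIdx
  have hL := LIdx_card_ge d δ hδ hd
  have hLpos : (0:ℝ) < ((LIdx d δ).card : ℝ) := lt_of_lt_of_le (by positivity) hL
  have hfrac : 1/((LIdx d δ).card : ℝ) ≤ δ * δ := by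
    rw [div_le_iff₀ hLpos]
    have hid : δ * δ * (δ⁻¹ * δ⁻¹) = 1 := by field_simp
    nlinarith [mul_le_mul_of_nonneg_left hL (by positivity : (0:ℝ) ≤ δ * δ)]
  have hSig0 : (0:ℝ) ≤ ∑ k ∈ LIdx d δ, (((A ∩ T k).ncard : ℝ))^2 :=
    Finset.sum_nonneg (fun k _ => sq_nonneg _)
  -- rpow collapse
  have hrw : δ * δ * ((δ^(-α))^2) * δ^(α-1) = δ^(1-α) := by
    have e2 : δ * δ = δ ^ ((2:ℕ):ℝ) := by rw [Real.rpow_natCast]; ring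
    rw [sq, e2, ← Real.rpow_add hδ, ← Real.rpow_add hδ, ← Real.rpow_add hδ]
    congr 1
    push_cast
    ring
  have hNsq : N^2 ≤ C₀^2 * (δ^(-α))^2 := by
    rw [← mul_pow]
    apply pow_le_pow_left₀ hN0 hNhi
  -- final chain
  rw [Real.rpow_one]
  calc (1 / ((LIdx d δ).card : ℝ)) * ∑ k ∈ LIdx d δ, (((A ∩ T k).ncard : ℝ))^2
      ≤ (δ * δ) * ∑ k ∈ LIdx d δ, (((A ∩ T k).ncard : ℝ))^2 :=
        mul_le_mul_of_nonneg_right hfrac hSig0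
    _ ≤ (δ * δ) * (156 * c^2 * C₀ * ((J:ℝ)+1) * N^2 * δ^(α-1)) :=
        mul_le_mul_of_nonneg_left hmain (by positivity)
    _ ≤ (δ * δ) * (156 * c^2 * C₀ * (6 * |Real.log δ|) * (C₀^2 * (δ^(-α))^2) * δ^(α-1)) := by
        apply mul_le_mul_of_nonneg_left _ (by positivity)
        have hpos1 : (0:ℝ) ≤ 156 * c^2 * C₀ := by positivity
        have hpos2 : (0:ℝ) ≤ δ^(α-1) := Real.rpow_nonneg hδ.le _
        have h1 : 156 * c^2 * C₀ * ((J:ℝ)+1) * N^2 ≤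
            156 * c^2 * C₀ * (6 * |Real.log δ|) * (C₀^2 * (δ^(-α))^2) := by
          have h2 : ((J:ℝ)+1) * N^2 ≤ (6 * |Real.log δ|) * (C₀^2 * (δ^(-α))^2) :=
            mul_le_mul hJbound hNsq (by positivity) (by positivity)
          calc 156 * c^2 * C₀ * ((J:ℝ)+1) * N^2 =
                (156 * c^2 * C₀) * (((J:ℝ)+1) * N^2) := by ring
            _ ≤ (156 * c^2 * C₀) * ((6 * |Real.log δ|) * (C₀^2 * (δ^(-α))^2)) :=
                mul_le_mul_of_nonneg_left h2 hpos1
            _ = 156 * c^2 * C₀ * (6 * |Real.log δ|) * (C₀^2 * (δ^(-α))^2) := by ring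
        exact mul_le_mul_of_nonneg_right h1 hpos2
    _ = 936 * c^2 * C₀^3 * |Real.log δ| * (δ * δ * ((δ^(-α))^2) * δ^(α-1)) := by ring
    _ = 936 * c^2 * C₀^3 * |Real.log δ| * δ^(1-α) := by rw [hrw]
end

section
/- Let 𝒥 ⊆ ℝ² be a self-similar set that is not contained in a line. Then there exists α > 0 such that for every angle θ ∈ [0, 2π], the Hausdorff dimension of the orthogonal projection satisfies dim_H(π_θ(𝒥)) ≥ α, where π_θ(x,y) = x cos θ + y sin θ. -/
open MeasureTheory Metric Set
open scoped NNReal ENNReal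


lemma geo_summable (m : ℕ) : Summable (fun k : ℕ => ((1/2:ℝ))^(k+m+1)) := by
  have h := (summable_geometric_of_lt_one (by norm_num : (0:ℝ) ≤ 1/2) (by norm_num)).mul_left
    ((1/2:ℝ)^(m+1))
  exact h.congr (fun k => by ring)

lemma geo_tsum (m : ℕ) : ∑' k : ℕ, ((1/2:ℝ))^(k+m+1) = (1/2:ℝ)^m := by
  calc ∑' k : ℕ, ((1/2:ℝ))^(k+m+1) = ∑' k : ℕ, (1/2:ℝ)^(m+1) * (1/2)^k :=
        tsum_congr (fun k => by ring)
    _ = (1/2:ℝ)^(m+1) * 2 := by rw [tsum_mul_left, tsum_geometric_two]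
    _ = (1/2:ℝ)^m := by ring

lemma summable_of_le_geo {f : ℕ → ℝ} (h0 : ∀ n, 0 ≤ f n) (h1 : ∀ n, f n ≤ (1/2)^(n+1)) :
    Summable f := by
  refine Summable.of_nonneg_of_le h0 h1 ?_
  simpa using geo_summable 0

lemma tail_le_geo {f : ℕ → ℝ} (h0 : ∀ n, 0 ≤ f n) (h1 : ∀ n, f n ≤ (1/2)^(n+1)) (m : ℕ) :
    ∑' k, f (k+m) ≤ (1/2:ℝ)^m := by
  rw [← geo_tsum m]
  exact Summable.tsum_le_tsum (fun k => h1 (k+m))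
    (Summable.of_nonneg_of_le (fun k => h0 _) (fun k => h1 (k+m)) (geo_summable m)) (geo_summable m)

lemma diff_bound {f g : ℕ → ℝ} (hf0 : ∀ n, 0 ≤ f n) (hf1 : ∀ n, f n ≤ (1/2)^(n+1))
    (hg0 : ∀ n, 0 ≤ g n) (hg1 : ∀ n, g n ≤ (1/2)^(n+1)) (m : ℕ) (h : ∀ k < m, f k = g k) :
    |(∑' n, f n) - ∑' n, g n| ≤ (1/2:ℝ)^m := by
  have hf := summable_of_le_geo hf0 hf1
  have hg := summable_of_le_geo hg0 hg1
  have e1 := Summable.sum_add_tsum_nat_add (f := f) m hf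
  have e2 := Summable.sum_add_tsum_nat_add (f := g) m hg
  have efin : ∑ i ∈ Finset.range m, f i = ∑ i ∈ Finset.range m, g i :=
    Finset.sum_congr rfl (fun i hi => h i (Finset.mem_range.1 hi))
  have tf0 : 0 ≤ ∑' k, f (k+m) := tsum_nonneg (fun k => hf0 _)
  have tg0 : 0 ≤ ∑' k, g (k+m) := tsum_nonneg (fun k => hg0 _)
  have tf1 := tail_le_geo hf0 hf1 m
  have tg1 := tail_le_geo hg0 hg1 m
  rw [abs_le]
  constructor <;> nlinarith [tf1, tg1, tf0, tg0]


/-- reversed prefix of a branch -/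
def bpre (ω : ℕ → Bool) (n : ℕ) : List Bool := ((List.range n).map ω).reverse

lemma bpre_zero (ω : ℕ → Bool) : bpre ω 0 = [] := rfl
lemma bpre_succ (ω : ℕ → Bool) (n : ℕ) : bpre ω (n+1) = ω n :: bpre ω n := by
  simp [bpre, List.range_succ]
lemma bpre_length (ω : ℕ → Bool) (n : ℕ) : (bpre ω n).length = n := by simp [bpre]

open Classical in
/-- address of a point in a Cantor scheme -/
noncomputable def caddr (E : List Bool → Set ℝ) (t : ℝ) : ℕ → List Bool
  | 0 => []
  | n+1 => (if t ∈ E (true :: caddr E t n) then true else false) :: caddr E t n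

open Classical in
noncomputable def cdig (E : List Bool → Set ℝ) (t : ℝ) (n : ℕ) : Bool :=
  if t ∈ E (true :: caddr E t n) then true else false

lemma caddr_succ (E : List Bool → Set ℝ) (t : ℝ) (n : ℕ) :
    caddr E t (n+1) = cdig E t n :: caddr E t n := rfl

/-- address correctness -/
lemma caddr_eq (E : List Bool → Set ℝ) (hdisj : ∀ β, E (false :: β) ∩ E (true :: β) = ∅)
    (t : ℝ) (ω : ℕ → Bool) (ht : ∀ n, t ∈ E (bpre ω n)) (n : ℕ) :
    caddr E t n = bpre ω n := by
  induction n with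
  | zero => rfl
  | succ n ih =>
    rw [caddr_succ, bpre_succ, ih]
    congr 1
    have htn := ht (n+1); rw [bpre_succ] at htn
    rcases hb : ω n
    · rw [hb] at htn
      have : t ∉ E (true :: bpre ω n) := by
        intro hmem
        have := hdisj (bpre ω n)
        exact absurd (Set.mem_inter htn hmem) (by rw [this]; exact Set.notMem_empty t)
      simp [cdig, ih, this]
    · rw [hb] at htn
      simp [cdig, ih, htn]

lemma cdig_eq (E : List Bool → Set ℝ) (hdisj : ∀ β, E (false :: β) ∩ E (true :: β) = ∅)
    (t : ℝ) (ω : ℕ → Bool) (ht : ∀ n, t ∈ E (bpre ω n)) (n : ℕ) :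
    cdig E t n = ω n := by
  have h := caddr_eq E hdisj t ω ht (n+1)
  rw [caddr_succ, bpre_succ] at h
  exact (List.cons.injEq _ _ _ _ ▸ h).1

/-- the Hölder map -/
noncomputable def gmap (E : List Bool → Set ℝ) (t : ℝ) : ℝ :=
  ∑' n, cond (cdig E t n) ((1/2:ℝ)^(n+1)) 0

open Classical in
/-- remainder sequence for binary expansion -/
noncomputable def brem (y : ℝ) : ℕ → ℝ
  | 0 => y
  | n+1 => if (1/2:ℝ)^(n+1) ≤ brem y n then brem y n - (1/2)^(n+1) else brem y n

open Classical in
noncomputable def bdig (y : ℝ) (n : ℕ) : Bool :=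
  if (1/2:ℝ)^(n+1) ≤ brem y n then true else false

open Classical in
lemma brem_succ (y : ℝ) (n : ℕ) : brem y (n+1) =
    if (1/2:ℝ)^(n+1) ≤ brem y n then brem y n - (1/2)^(n+1) else brem y n := rfl

/-- binary expansion -/
lemma exists_binary (y : ℝ) (hy : y ∈ Icc (0:ℝ) 1) :
    ∃ ω : ℕ → Bool, (∑' n, cond (ω n) ((1/2:ℝ)^(n+1)) 0) = y := by
  have hrange : ∀ n, 0 ≤ brem y n ∧ brem y n ≤ (1/2:ℝ)^n := by
    intro n; induction n with
    | zero => simpa [brem] using hy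
    | succ n ih =>
      rw [brem_succ]
      by_cases hc : (1/2:ℝ)^(n+1) ≤ brem y n
      · rw [if_pos hc]
        refine ⟨by linarith, ?_⟩
        have : (1/2:ℝ)^n = 2 * (1/2)^(n+1) := by ring
        linarith [ih.2]
      · rw [if_neg hc]
        exact ⟨ih.1, by linarith [not_le.1 hc]⟩
  have hstep : ∀ n, cond (bdig y n) ((1/2:ℝ)^(n+1)) 0 = brem y n - brem y (n+1) := by
    intro n; rw [brem_succ, bdig]
    by_cases hc : (1/2:ℝ)^(n+1) ≤ brem y n
    · rw [if_pos hc, if_pos hc]; simp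
    · rw [if_neg hc, if_neg hc]; simp
  have hpartial : ∀ n, ∑ i ∈ Finset.range n, cond (bdig y i) ((1/2:ℝ)^(i+1)) 0
      = y - brem y n := by
    intro n; induction n with
    | zero => simp [brem]
    | succ n ih => rw [Finset.sum_range_succ, ih, hstep]; ring
  refine ⟨bdig y, ?_⟩
  have h0 : ∀ n, 0 ≤ cond (bdig y n) ((1/2:ℝ)^(n+1)) 0 := fun n => by
    cases bdig y n <;> norm_num
  have hrem0 : Filter.Tendsto (brem y) Filter.atTop (nhds 0) := by
    have h2 : Filter.Tendsto (fun n : ℕ => ((1/2:ℝ))^n) Filter.atTop (nhds 0) :=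
      tendsto_pow_atTop_nhds_zero_of_lt_one (by norm_num) (by norm_num)
    exact squeeze_zero (fun n => (hrange n).1) (fun n => (hrange n).2) h2
  have hT : Filter.Tendsto (fun n => ∑ i ∈ Finset.range n, cond (bdig y i) ((1/2:ℝ)^(i+1)) 0)
      Filter.atTop (nhds y) := by
    simp only [hpartial]
    simpa using (tendsto_const_nhds (x := y)).sub hrem0
  exact ((hasSum_iff_tendsto_nat_of_nonneg h0 y).2 hT).tsum_eq


lemma caddr_zero (E : List Bool → Set ℝ) (t : ℝ) : caddr E t 0 = [] := rfl


/-- projection onto direction u -/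
noncomputable def pjq (u x : ℂ) : ℝ := (x * (starRingEnd ℂ) u).re

lemma pjq_apply (u x : ℂ) : pjq u x = x.re * u.re + x.im * u.im := by
  simp [pjq, Complex.mul_re]

lemma pjq_sub (u x y : ℂ) : pjq u x - pjq u y = pjq u (x - y) := by
  simp [pjq_apply]; ring

lemma abs_pjq_le (u x : ℂ) : |pjq u x| ≤ ‖x‖ * ‖u‖ := by
  have h1 : |(x * (starRingEnd ℂ) u).re| ≤ ‖x * (starRingEnd ℂ) u‖ :=
    Complex.abs_re_le_norm _
  have h2 : ‖x * (starRingEnd ℂ) u‖ = ‖x‖ * ‖u‖ := by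
    rw [norm_mul, Complex.norm_conj]
  rw [pjq]
  calc |(x * (starRingEnd ℂ) u).re| ≤ ‖x‖ * ‖u‖ := h2 ▸ h1
    _ = ‖x‖ * ‖u‖ := rfl

lemma pjq_polar (u x : ℂ) : pjq u x = (‖x + u‖^2 - ‖x - u‖^2)/4 := by
  have h : ∀ w : ℂ, ‖w‖^2 = w.re^2 + w.im^2 := by
    intro w
    rw [Complex.sq_norm, Complex.normSq_apply]
    ring
  rw [pjq_apply, h, h]
  simp [Complex.add_re, Complex.add_im, Complex.sub_re, Complex.sub_im]
  ring

lemma pjq_isom (O : ℂ ≃ₗᵢ[ℝ] ℂ) (u x : ℂ) : pjq u (O x) = pjq (O.symm u) x := by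
  rw [pjq_polar, pjq_polar]
  have h1 : ‖O x + u‖ = ‖x + O.symm u‖ := by
    conv_lhs => rw [← O.apply_symm_apply u]
    rw [← map_add, O.norm_map]
  have h2 : ‖O x - u‖ = ‖x - O.symm u‖ := by
    conv_lhs => rw [← O.apply_symm_apply u]
    rw [← map_sub, O.norm_map]
  rw [h1, h2]

lemma pjq_smul (u : ℂ) (r : ℝ) (x : ℂ) : pjq u (r • x) = r * pjq u x := by
  simp [pjq_apply, Complex.smul_re, Complex.smul_im]
  ring

section words
variable {s : ℕ} (T : Fin s → ℂ → ℂ) (lam : Fin s → ℝ) (rot : Fin s → ℂ ≃ₗᵢ[ℝ] ℂ) (z : Fin s → ℂ)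

def Tl : List (Fin s) → ℂ → ℂ := fun l => l.foldr (fun i f => T i ∘ f) id
def lamL : List (Fin s) → ℝ := fun l => (l.map lam).prod
noncomputable def rotL : List (Fin s) → (ℂ ≃ₗᵢ[ℝ] ℂ) :=
  fun l => l.foldr (fun i e => e.trans (rot i)) (LinearIsometryEquiv.refl ℝ ℂ)

@[simp] lemma Tl_nil : Tl T [] = id := rfl
lemma Tl_cons (i : Fin s) (l : List (Fin s)) : Tl T (i :: l) = T i ∘ Tl T l := rfl
@[simp] lemma lamL_nil : lamL lam [] = 1 := rfl
lemma lamL_cons (i : Fin s) (l : List (Fin s)) : lamL lam (i :: l) = lam i * lamL lam l := by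
  simp [lamL]
lemma rotL_cons_symm (i : Fin s) (l : List (Fin s)) (u : ℂ) :
    (rotL rot (i :: l)).symm u = (rotL rot l).symm ((rot i).symm u) := rfl
@[simp] lemma rotL_nil_symm (u : ℂ) : (rotL rot []).symm u = u := rfl

lemma norm_rotL_symm (l : List (Fin s)) (u : ℂ) : ‖(rotL rot l).symm u‖ = ‖u‖ :=
  (rotL rot l).symm.norm_map u

lemma lamL_pos (hlam : ∀ i, 0 < lam i) (l : List (Fin s)) : 0 < lamL lam l := by
  induction l with
  | nil => norm_num
  | cons i l ih => rw [lamL_cons]; exact mul_pos (hlam i) ih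

lemma lamL_append (l₁ l₂ : List (Fin s)) : lamL lam (l₁ ++ l₂) = lamL lam l₁ * lamL lam l₂ := by
  simp [lamL]

lemma Tl_append (l₁ l₂ : List (Fin s)) : Tl T (l₁ ++ l₂) = Tl T l₁ ∘ Tl T l₂ := by
  induction l₁ with
  | nil => rfl
  | cons i l ih => simp [Tl_cons, List.cons_append, ih]; rfl

lemma pjq_Tl_sub (hT : ∀ i x, T i x = lam i • (rot i x) + z i) :
    ∀ (l : List (Fin s)) (u x y : ℂ),
      pjq u (Tl T l x) - pjq u (Tl T l y)
        = lamL lam l * (pjq ((rotL rot l).symm u) x - pjq ((rotL rot l).symm u) y) := by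
  intro l
  induction l with
  | nil => intro u x y; simp
  | cons i l ih =>
    intro u x y
    rw [Tl_cons, lamL_cons, rotL_cons_symm]
    have hd : T i (Tl T l x) - T i (Tl T l y) = lam i • (rot i (Tl T l x - Tl T l y)) := by
      rw [hT i, hT i, map_sub]
      module
    calc pjq u (T i (Tl T l x)) - pjq u (T i (Tl T l y))
        = pjq u (T i (Tl T l x) - T i (Tl T l y)) := pjq_sub u _ _
      _ = lam i * pjq u (rot i (Tl T l x - Tl T l y)) := by rw [hd, pjq_smul]
      _ = lam i * pjq ((rot i).symm u) (Tl T l x - Tl T l y) := by rw [pjq_isom]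
      _ = lam i * (pjq ((rot i).symm u) (Tl T l x) - pjq ((rot i).symm u) (Tl T l y)) := by
          rw [← pjq_sub]
      _ = lam i * (lamL lam l * (pjq ((rotL rot l).symm ((rot i).symm u)) x
            - pjq ((rotL rot l).symm ((rot i).symm u)) y)) := by rw [ih]
      _ = _ := by ring

variable {J : Set ℂ}

lemma T_image_subset (hself : J = ⋃ i, T i '' J) (i : Fin s) : T i '' J ⊆ J := by
  intro x hx
  rw [hself]
  exact Set.mem_iUnion.2 ⟨i, hx⟩

lemma Tl_image_subset (hself : J = ⋃ i, T i '' J) (l : List (Fin s)) : Tl T l '' J ⊆ J := by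
  induction l with
  | nil => simp
  | cons i l ih =>
    rw [Tl_cons, Set.image_comp]
    exact (Set.image_mono (f := T i) ih).trans (T_image_subset T hself i)

lemma Tl_continuous (hT : ∀ i x, T i x = lam i • (rot i x) + z i) (l : List (Fin s)) :
    Continuous (Tl T l) := by
  induction l with
  | nil => exact continuous_id
  | cons i l ih =>
    rw [Tl_cons]
    have hTi : Continuous (T i) := by
      have : (T i) = fun x => lam i • (rot i x) + z i := funext (hT i)
      rw [this]
      exact (((rot i).continuous).const_smul (lam i)).add continuous_const
    exact hTi.comp ih

/-- stopping time lemma -/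
lemma stopping (hself : J = ⋃ i, T i '' J) {lmin lmax : ℝ}
    (hmin : ∀ i, lmin ≤ lam i) (hl0 : 0 < lmin) (hmax : ∀ i, lam i ≤ lmax) (hmax1 : lmax < 1)
    (i₀ : Fin s) :
    ∀ (n : ℕ) (ε : ℝ), lmax ^ n < ε → ε ≤ 1 → ∀ x ∈ J,
      ∃ l : List (Fin s), x ∈ Tl T l '' J ∧ lamL lam l ≤ ε ∧ lmin * ε < lamL lam l := by
  have hlmax0 : 0 < lmax := lt_of_lt_of_le hl0 ((hmin i₀).trans (hmax i₀))
  have hlmin1 : lmin < 1 := lt_of_le_of_lt ((hmin i₀).trans (hmax i₀)) hmax1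
  intro n
  induction n with
  | zero =>
    intro ε hε hε1
    norm_num at hε
    linarith
  | succ n ih =>
    intro ε hε hε1 x hx
    by_cases h1 : (1:ℝ) ≤ ε
    · have hε' : ε = 1 := le_antisymm hε1 h1
      refine ⟨[], ⟨x, hx, rfl⟩, by simp [hε'], by simp [hε', hlmin1]⟩
    · push_neg at h1
      have hx' : x ∈ ⋃ i, T i '' J := hself ▸ hx
      obtain ⟨i, y, hy, hxy⟩ := Set.mem_iUnion.1 hx'
      have hεpos : 0 < ε := lt_trans (pow_pos hlmax0 _) hε
      by_cases h2 : lam i ≤ ε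
      · refine ⟨[i], ⟨y, hy, hxy⟩, ?_, ?_⟩
        · rw [lamL_cons]; simpa using h2
        · rw [lamL_cons, lamL_nil, mul_one]
          calc lmin * ε < lmin * 1 := by
                exact mul_lt_mul_of_pos_left h1 hl0
            _ = lmin := mul_one lmin
            _ ≤ lam i := hmin i
      · push_neg at h2
        have hlami : 0 < lam i := lt_of_lt_of_le hl0 (hmin i)
        have hε2 : ε / lam i ≤ 1 := by
          rw [div_le_one hlami]; exact h2.le
        have hε3 : lmax ^ n < ε / lam i := by
          have hstep : lmax ^ (n+1) = lmax ^ n * lmax := by ring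
          have h4 : lmax ^ n < ε / lmax := by
            rw [lt_div_iff₀ hlmax0]; rw [hstep] at hε; exact hε
          apply lt_of_lt_of_le h4
          apply div_le_div_of_nonneg_left hεpos.le hlami
          exact hmax i
        obtain ⟨l', hl'mem, hl'ub, hl'lb⟩ := ih (ε / lam i) hε3 hε2 y hy
        refine ⟨i :: l', ?_, ?_, ?_⟩
        · obtain ⟨w, hw, hww⟩ := hl'mem
          refine ⟨w, hw, ?_⟩
          show T i (Tl T l' w) = x
          rw [hww, hxy]
        · rw [lamL_cons]
          calc lam i * lamL lam l' ≤ lam i * (ε / lam i) :=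
                mul_le_mul_of_nonneg_left hl'ub hlami.le
            _ = ε := by field_simp
        · rw [lamL_cons]
          calc lmin * ε = lam i * (lmin * (ε / lam i)) := by rw [mul_comm lmin (ε / lam i), ← mul_assoc, mul_div_cancel₀ _ hlami.ne']; ring
            _ < lam i * lamL lam l' := mul_lt_mul_of_pos_left hl'lb hlami
  
end words

lemma basis_decomp (u w : ℂ) (hu : ‖u‖ = 1) :
    w = (pjq u w) • u + (pjq (Complex.I * u) w) • (Complex.I * u) := by
  have hn : u.re^2 + u.im^2 = 1 := by
    have h1 : ‖u‖ = 1 := hu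
    have h2 : Complex.normSq u = 1 := by
      rw [← Complex.sq_norm, h1]; norm_num
    rw [Complex.normSq_apply] at h2
    nlinarith
  apply Complex.ext
  · simp [pjq_apply, Complex.add_re, Complex.smul_re, Complex.mul_re, Complex.mul_im,
      Complex.I_re, Complex.I_im]
    linear_combination -(w.re * hn)
  · simp [pjq_apply, Complex.add_im, Complex.smul_im, Complex.mul_re, Complex.mul_im,
      Complex.I_re, Complex.I_im]
    linear_combination -(w.im * hn)

lemma sep_exists (J : Set ℂ) (hJne : J.Nonempty) (hline : ¬ Collinear ℝ J) :
    ∃ d : ℝ, 0 < d ∧ ∀ u : ℂ, ‖u‖ = 1 → ∃ x ∈ J, ∃ y ∈ J, d ≤ |pjq u x - pjq u y| := by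
  obtain ⟨a, ha⟩ := hJne
  rw [collinear_iff_of_mem ha] at hline
  push_neg at hline
  obtain ⟨b, hb, hba⟩ := hline 0
  have hba' : b ≠ a := by
    intro h; exact hba 0 (by simp [h])
  obtain ⟨c, hc, hcl⟩ := hline (b - a)
  -- positivity of the max
  have hpos : ∀ u : ℂ, ‖u‖ = 1 → 0 < max |pjq u (b-a)| |pjq u (c-a)| := by
    intro u hu
    by_contra h
    push_neg at h
    have h1 : |pjq u (b-a)| = 0 ∧ |pjq u (c-a)| = 0 := by
      constructor <;> [have := le_max_left |pjq u (b-a)| |pjq u (c-a)|;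
        have := le_max_right |pjq u (b-a)| |pjq u (c-a)|] <;>
        [skip; skip] <;> nlinarith [abs_nonneg (pjq u (b-a)), abs_nonneg (pjq u (c-a))]
    have hb0 : pjq u (b-a) = 0 := abs_eq_zero.1 h1.1
    have hc0 : pjq u (c-a) = 0 := abs_eq_zero.1 h1.2
    have hbd := basis_decomp u (b-a) hu
    have hcd := basis_decomp u (c-a) hu
    rw [hb0, zero_smul, zero_add] at hbd
    rw [hc0, zero_smul, zero_add] at hcd
    set t₁ := pjq (Complex.I * u) (b-a)
    set t₂ := pjq (Complex.I * u) (c-a)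
    have ht₁ : t₁ ≠ 0 := by
      intro h0
      rw [h0, zero_smul] at hbd
      exact hba' (sub_eq_zero.1 hbd)
    apply hcl (t₂/t₁)
    have : c - a = (t₂/t₁) • (b - a) := by
      rw [hbd, smul_smul, div_mul_cancel₀ _ ht₁, hcd]
    simp only [vadd_eq_add]
    linear_combination (norm := module) this
  -- continuity and compactness
  set f : ℂ → ℝ := fun u => max |pjq u (b-a)| |pjq u (c-a)| with hf
  have hcont : Continuous f := by
    apply Continuous.max
    · apply Continuous.abs
      simp only [pjq_apply]
      fun_prop
    · apply Continuous.abs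
      simp only [pjq_apply]
      fun_prop
  have hcomp : IsCompact (sphere (0:ℂ) 1) := isCompact_sphere 0 1
  have hsne : (sphere (0:ℂ) 1).Nonempty := ⟨1, by simp⟩
  obtain ⟨u₀, hu₀, hmin⟩ := hcomp.exists_isMinOn hsne hcont.continuousOn
  have hu₀1 : ‖u₀‖ = 1 := mem_sphere_zero_iff_norm.1 hu₀
  refine ⟨f u₀, hpos u₀ hu₀1, ?_⟩
  intro u hu
  have hfu : f u₀ ≤ f u := hmin (mem_sphere_zero_iff_norm.2 hu)
  rcases le_max_iff.1 hfu with h | h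
  · exact ⟨b, hb, a, ha, by rw [pjq_sub]; exact h⟩
  · exact ⟨c, hc, a, ha, by rw [pjq_sub]; exact h⟩

theorem cantor_dim (E : List Bool → Set ℝ) (ρ σ : ℝ) (hρ0 : 0 < ρ) (hρ1 : ρ < 1) (hσ : 0 < σ)
    (h1 : ∀ β, (E β).Nonempty) (h2 : ∀ β, IsCompact (E β))
    (h3 : ∀ β b, E (b :: β) ⊆ E β)
    (h4 : ∀ β, ∀ x ∈ E (false :: β), ∀ y ∈ E (true :: β), σ * ρ ^ β.length ≤ |x - y|) :
    ENNReal.ofReal (Real.log 2 / Real.log ρ⁻¹) ≤ dimH (E []) := by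
  classical
  set r : ℝ := Real.log 2 / Real.log ρ⁻¹ with hr
  have hlogρ : 0 < Real.log ρ⁻¹ := by
    rw [Real.log_inv]
    linarith [Real.log_neg hρ0 hρ1]
  have hr0 : 0 < r := div_pos (Real.log_pos one_lt_two) hlogρ
  have hhalf : ρ ^ r = (2:ℝ)⁻¹ := by
    rw [Real.rpow_def_of_pos hρ0]
    have hlρ : Real.log ρ ≠ 0 := by
      have := Real.log_neg hρ0 hρ1; linarith
    have : Real.log ρ * r = -Real.log 2 := by
      rw [hr, Real.log_inv]
      field_simp
    rw [this, Real.exp_neg, Real.exp_log two_pos]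
  have hρr : ∀ m : ℕ, ((ρ:ℝ) ^ m) ^ r = (1/2:ℝ)^m := by
    intro m
    rw [← Real.rpow_natCast ρ m, ← Real.rpow_mul hρ0.le, mul_comm, Real.rpow_mul hρ0.le,
      hhalf, Real.rpow_natCast]
    norm_num
  have hdisj : ∀ β, E (false :: β) ∩ E (true :: β) = ∅ := by
    intro β
    by_contra h
    obtain ⟨x, hx1, hx2⟩ := Set.nonempty_iff_ne_empty.2 h
    have := h4 β x hx1 x hx2
    have hpos : 0 < σ * ρ ^ β.length := by positivity
    simp at this; linarith
  set S : Set ℝ := {t | ∃ ω : ℕ → Bool, ∀ n, t ∈ E (bpre ω n)} with hSdef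
  -- digit sequences of points in S are correct
  have hmemS : ∀ t ∈ S, ∀ n, t ∈ E (caddr E t n) := by
    rintro t ⟨ω, hω⟩ n
    rw [caddr_eq E hdisj t ω hω n]; exact hω n
  have caddr_len : ∀ t ∈ S, ∀ n, (caddr E t n).length = n := by
    rintro t ⟨ω, hω⟩ n
    rw [caddr_eq E hdisj t ω hω n, bpre_length]
  -- digit bounds
  have hdb0 : ∀ t n, (0:ℝ) ≤ cond (cdig E t n) ((1/2:ℝ)^(n+1)) 0 := by
    intro t n; cases cdig E t n <;> norm_num
  have hdb1 : ∀ t n, cond (cdig E t n) ((1/2:ℝ)^(n+1)) 0 ≤ (1/2:ℝ)^(n+1) := by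
    intro t n; cases cdig E t n <;> norm_num
  set rr : ℝ≥0 := r.toNNReal with hrr
  have hrrc : ((rr : ℝ≥0) : ℝ) = r := Real.coe_toNNReal _ hr0.le
  set CC : ℝ≥0 := (σ ^ (-r)).toNNReal with hCC
  have haux : ∀ t t' : ℝ, ∀ k, (∀ j, j < k → cdig E t j = cdig E t' j) →
      caddr E t k = caddr E t' k := by
    intro t t' k
    induction k with
    | zero => intro _; rw [caddr_zero, caddr_zero]
    | succ k ih =>
      intro hj
      rw [caddr_succ, caddr_succ, hj k (Nat.lt_succ_self k),
        ih (fun j hjk => hj j (hjk.trans (Nat.lt_succ_self k)))]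
  have hHolder : HolderOnWith CC rr (gmap E) S := by
    intro t ht t' ht'
    by_cases hsame : ∀ n, cdig E t n = cdig E t' n
    · have hgg : gmap E t = gmap E t' := tsum_congr fun n => by rw [hsame n]
      simp [hgg]
    · push_neg at hsame
      have hex : ∃ n, cdig E t n ≠ cdig E t' n := hsame
      set m := Nat.find hex with hm
      have hdm : cdig E t m ≠ cdig E t' m := Nat.find_spec hex
      have hdk : ∀ k, k < m → cdig E t k = cdig E t' k := fun k hk => by
        by_contra hne; exact absurd (Nat.find_le hne) (not_le.2 hk)
      have haddr : caddr E t m = caddr E t' m := haux t t' m hdk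
      -- separation
      have hsep : σ * ρ ^ m ≤ |t - t'| := by
        have hmt : t ∈ E (cdig E t m :: caddr E t m) := by
          have := hmemS t ht (m+1); rwa [caddr_succ] at this
        have hmt' : t' ∈ E (cdig E t' m :: caddr E t m) := by
          have := hmemS t' ht' (m+1); rwa [caddr_succ, ← haddr] at this
        have hlen : (caddr E t m).length = m := caddr_len t ht m
        rcases hb : cdig E t m
        · have hb' : cdig E t' m = true := by
            rcases hb2 : cdig E t' m
            · exact absurd (hb.trans hb2.symm) hdm
            · rfl
          rw [hb] at hmt; rw [hb'] at hmt'
          have := h4 (caddr E t m) t hmt t' hmt'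
          rwa [hlen] at this
        · have hb' : cdig E t' m = false := by
            rcases hb2 : cdig E t' m
            · rfl
            · exact absurd (hb.trans hb2.symm) hdm
          rw [hb] at hmt; rw [hb'] at hmt'
          have := h4 (caddr E t m) t' hmt' t hmt
          rw [hlen] at this
          rwa [abs_sub_comm] at this
      -- value bound
      have hval : |gmap E t - gmap E t'| ≤ (1/2:ℝ)^m :=
        diff_bound (hdb0 t) (hdb1 t) (hdb0 t') (hdb1 t') m
          (fun k hk => by rw [hdk k hk])
      -- real inequality
      have hreal : dist (gmap E t) (gmap E t') ≤ σ ^ (-r) * dist t t' ^ r := by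
        rw [Real.dist_eq, Real.dist_eq]
        have hd1 : σ * ρ ^ m ≤ |t - t'| := hsep
        have h6 : ((1:ℝ)/2)^m = ((σ * ρ ^ m)/σ) ^ r := by
          rw [mul_div_cancel_left₀ _ hσ.ne', hρr]
        have h7 : ((σ * ρ ^ m)/σ) ^ r ≤ (|t - t'|/σ) ^ r := by
          exact Real.rpow_le_rpow (by positivity)
            (div_le_div_of_nonneg_right hd1 hσ.le) hr0.le
        have h8 : (|t - t'|/σ) ^ r = σ ^ (-r) * |t - t'| ^ r := by
          rw [Real.div_rpow (abs_nonneg _) hσ.le, Real.rpow_neg hσ.le]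
          ring
        calc |gmap E t - gmap E t'| ≤ (1/2:ℝ)^m := hval
          _ = ((σ * ρ ^ m)/σ) ^ r := h6
          _ ≤ (|t - t'|/σ) ^ r := h7
          _ = σ ^ (-r) * |t - t'| ^ r := h8
      -- convert to edist
      rw [edist_dist, edist_dist]
      calc ENNReal.ofReal (dist (gmap E t) (gmap E t'))
          ≤ ENNReal.ofReal (σ ^ (-r) * dist t t' ^ r) := ENNReal.ofReal_le_ofReal hreal
        _ = ENNReal.ofReal (σ ^ (-r)) * ENNReal.ofReal (dist t t' ^ r) :=
            ENNReal.ofReal_mul (by positivity)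
        _ = (CC : ℝ≥0∞) * ENNReal.ofReal (dist t t') ^ (rr : ℝ) := by
            rw [hrrc, ENNReal.ofReal_rpow_of_nonneg dist_nonneg hr0.le]
            rfl
  -- surjectivity onto [0,1]
  have hsurj : Icc (0:ℝ) 1 ⊆ gmap E '' S := by
    intro y hy
    obtain ⟨ω, hωy⟩ := exists_binary y hy
    have hnest : ∀ n, E (bpre ω (n+1)) ⊆ E (bpre ω n) := fun n => by
      rw [bpre_succ]; exact h3 _ _
    have hne : (⋂ n, E (bpre ω n)).Nonempty :=
      IsCompact.nonempty_iInter_of_sequence_nonempty_isCompact_isClosed _ hnest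
        (fun n => h1 _) (h2 _) (fun n => (h2 _).isClosed)
    obtain ⟨t, ht⟩ := hne
    rw [Set.mem_iInter] at ht
    have htS : t ∈ S := ⟨ω, ht⟩
    refine ⟨t, htS, ?_⟩
    rw [gmap]
    rw [← hωy]
    exact tsum_congr fun n => by rw [cdig_eq E hdisj t ω ht n]
  -- conclusion
  have hS : S ⊆ E [] := by
    rintro t ⟨ω, h⟩
    have := h 0; rwa [bpre_zero] at this
  have hIcc : dimH (Icc (0:ℝ) 1) = 1 := by
    rw [Real.dimH_of_nonempty_interior (by rw [interior_Icc]; exact Set.nonempty_Ioo.2 one_pos)]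
    simp
  have h1d : (1:ℝ≥0∞) ≤ dimH (gmap E '' S) := hIcc ▸ dimH_mono hsurj
  have hrr0 : 0 < rr := Real.toNNReal_pos.2 hr0
  have hchain := hHolder.dimH_image_le hrr0
  have hfin : (rr : ℝ≥0∞) ≤ dimH S := by
    have h2' : (1:ℝ≥0∞) ≤ dimH S / rr := le_trans h1d hchain
    rw [ENNReal.le_div_iff_mul_le (Or.inl (by exact_mod_cast hrr0.ne')) (Or.inl ENNReal.coe_ne_top)] at h2'
    simpa using h2'
  calc ENNReal.ofReal r = (rr : ℝ≥0∞) := rfl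
    _ ≤ dimH S := hfin
    _ ≤ dimH (E []) := dimH_mono hS


/-- The linear projection `π_θ(x,y) = x cos θ + y sin θ`. -/
noncomputable def linproj (θ : ℝ) (z : ℂ) : ℝ := z.re * Real.cos θ + z.im * Real.sin θ

/-- A self-similar set not contained in a line has all of its orthogonal projections
of Hausdorff dimension at least `α`, for some `α > 0`. -/
theorem stmt18 (s : ℕ) (T : Fin s → ℂ → ℂ) (lam : Fin s → ℝ)
    (rot : Fin s → ℂ ≃ₗᵢ[ℝ] ℂ) (z : Fin s → ℂ)
    (hlam : ∀ i, 0 < lam i ∧ lam i < 1)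
    (hT : ∀ i x, T i x = lam i • (rot i x) + z i)
    (J : Set ℂ) (hJc : IsCompact J) (hJne : J.Nonempty)
    (hself : J = ⋃ i, T i '' J)
    (hline : ¬ Collinear ℝ J) :
    ∃ α : ℝ, 0 < α ∧ ∀ θ ∈ Icc (0 : ℝ) (2 * Real.pi),
      ENNReal.ofReal α ≤ dimH (linproj θ '' J) := by
  classical
  -- s is positive
  have hs0 : 0 < s := by
    rcases Nat.eq_zero_or_pos s with h | h
    · subst h
      rw [iUnion_of_empty] at hself
      exact absurd (hself ▸ hJne) (by simp)
    · exact h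
  set i₀ : Fin s := ⟨0, hs0⟩ with hi₀
  -- min and max contraction ratios
  obtain ⟨imin, -, hminle⟩ := Finset.exists_min_image (Finset.univ : Finset (Fin s)) lam
    ⟨i₀, Finset.mem_univ i₀⟩
  obtain ⟨imax, -, hmaxle⟩ := Finset.exists_max_image (Finset.univ : Finset (Fin s)) lam
    ⟨i₀, Finset.mem_univ i₀⟩
  set lmin := lam imin with hlmindef
  set lmax := lam imax with hlmaxdef
  have hminle' : ∀ i, lmin ≤ lam i := fun i => hminle i (Finset.mem_univ i)
  have hmaxle' : ∀ i, lam i ≤ lmax := fun i => hmaxle i (Finset.mem_univ i)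
  have hlmin0 : 0 < lmin := (hlam imin).1
  have hlmax1 : lmax < 1 := (hlam imax).2
  have hlmin1 : lmin < 1 := lt_of_le_of_lt ((hminle' imax).trans (hmaxle' imax)) hlmax1
  -- diameter bound
  obtain ⟨C, hC⟩ := isBounded_iff.1 hJc.isBounded
  set D : ℝ := max C 1 with hDdef
  have hD1 : (1:ℝ) ≤ D := le_max_right C 1
  have hD0 : (0:ℝ) < D := lt_of_lt_of_le one_pos hD1
  have hDb : ∀ x ∈ J, ∀ y ∈ J, dist x y ≤ D := fun x hx y hy =>
    (hC hx hy).trans (le_max_left C 1)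
  -- separation constant
  obtain ⟨d, hd0, hsep⟩ := sep_exists J hJne hline
  have hdD : d ≤ D := by
    obtain ⟨x, hx, y, hy, hxy⟩ := hsep 1 (by simp)
    have h1 : |pjq 1 x - pjq 1 y| ≤ D := by
      rw [pjq_sub]
      calc |pjq 1 (x - y)| ≤ ‖x - y‖ * ‖(1:ℂ)‖ := abs_pjq_le 1 _
        _ = dist x y := by rw [norm_one, mul_one, dist_eq_norm]
        _ ≤ D := hDb x hx y hy
    linarith
  set ε : ℝ := d / (4 * D) with hεdef
  have hε0 : 0 < ε := div_pos hd0 (by linarith)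
  have hε1 : ε ≤ 1 := by
    rw [hεdef, div_le_one (by linarith)]
    linarith
  set ρ' : ℝ := lmin * ε with hρ'def
  have hρ'0 : 0 < ρ' := mul_pos hlmin0 hε0
  have hρ'1 : ρ' < 1 := by
    calc ρ' ≤ lmin * 1 := mul_le_mul_of_nonneg_left hε1 hlmin0.le
      _ = lmin := mul_one lmin
      _ < 1 := hlmin1
  refine ⟨Real.log 2 / Real.log ρ'⁻¹, ?_, ?_⟩
  · apply div_pos (Real.log_pos one_lt_two)
    rw [Real.log_inv]
    linarith [Real.log_neg hρ'0 hρ'1]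
  intro θ hθ
  set u : ℂ := Complex.exp ((θ:ℂ) * Complex.I) with hudef
  have hu : ‖u‖ = 1 := by
    rw [hudef, Complex.norm_exp_ofReal_mul_I]
  have himg : linproj θ '' J = pjq u '' J := by
    apply Set.image_congr
    intro z _
    rw [linproj, pjq_apply, hudef, Complex.exp_ofReal_mul_I_re, Complex.exp_ofReal_mul_I_im]
  -- Lemma A: two separated children
  have lemA : ∀ v : ℂ, ∃ F : Bool → List (Fin s), ‖v‖ = 1 →
      ((∀ b, ρ' ≤ lamL lam (F b) ∧ lamL lam (F b) ≤ ε) ∧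
        ∀ p ∈ Tl T (F false) '' J, ∀ q ∈ Tl T (F true) '' J,
          d/2 ≤ |pjq v p - pjq v q|) := by
    intro v
    by_cases hv : ‖v‖ = 1
    · obtain ⟨x, hx, y, hy, hxy⟩ := hsep v hv
      obtain ⟨n, hn⟩ := exists_pow_lt_of_lt_one hε0 hlmax1
      obtain ⟨l₀, hl₀m, hl₀ub, hl₀lb⟩ :=
        stopping T lam hself hminle' hlmin0 hmaxle' hlmax1 i₀ n ε hn hε1 x hx
      obtain ⟨l₁, hl₁m, hl₁ub, hl₁lb⟩ :=
        stopping T lam hself hminle' hlmin0 hmaxle' hlmax1 i₀ n ε hn hε1 y hy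
      refine ⟨fun b => if b then l₁ else l₀, fun _ => ⟨?_, ?_⟩⟩
      · intro b
        rcases b
        · simpa using ⟨hl₀lb.le, hl₀ub⟩
        · simpa using ⟨hl₁lb.le, hl₁ub⟩
      · intro p hp q hq
        simp only [if_neg Bool.false_ne_true, if_pos rfl] at hp hq
        -- bound |pjq v p - pjq v x| ≤ d/4 and similarly for q, y
        have hεD : ε * D = d / 4 := by
          rw [hεdef]
          field_simp
        have key : ∀ (l : List (Fin s)), lamL lam l ≤ ε → ∀ w ∈ Tl T l '' J,
            ∀ w' ∈ Tl T l '' J, |pjq v w - pjq v w'| ≤ d / 4 := by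
          intro l hl w hw w' hw'
          obtain ⟨a, haJ, rfl⟩ := hw
          obtain ⟨a', haJ', rfl⟩ := hw'
          rw [pjq_Tl_sub T lam rot z hT l v a a', abs_mul,
            abs_of_pos (lamL_pos lam (fun i => (hlam i).1) l)]
          have h2 : |pjq ((rotL rot l).symm v) a - pjq ((rotL rot l).symm v) a'| ≤ D := by
            rw [pjq_sub]
            calc |pjq ((rotL rot l).symm v) (a - a')|
                ≤ ‖a - a'‖ * ‖(rotL rot l).symm v‖ := abs_pjq_le _ _
              _ = dist a a' := by rw [norm_rotL_symm, hv, mul_one, dist_eq_norm]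
              _ ≤ D := hDb a haJ a' haJ'
          calc lamL lam l * |pjq ((rotL rot l).symm v) a - pjq ((rotL rot l).symm v) a'|
              ≤ ε * D := mul_le_mul hl h2 (abs_nonneg _)  hε0.le
            _ = d / 4 := hεD
        have hB := key l₀ hl₀ub p hp x hl₀m
        have hC' := key l₁ hl₁ub q hq y hl₁m
        have h3 : pjq v x - pjq v y = (pjq v p - pjq v q) - (pjq v p - pjq v x)
            + (pjq v q - pjq v y) := by ring
        have h4 : |pjq v x - pjq v y| ≤ |pjq v p - pjq v q| + |pjq v p - pjq v x|
            + |pjq v q - pjq v y| := by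
          rw [h3]
          calc |pjq v p - pjq v q - (pjq v p - pjq v x) + (pjq v q - pjq v y)|
              ≤ |pjq v p - pjq v q - (pjq v p - pjq v x)| + |pjq v q - pjq v y| := abs_add_le _ _
            _ ≤ |pjq v p - pjq v q| + |pjq v p - pjq v x| + |pjq v q - pjq v y| := by
                have := abs_sub (pjq v p - pjq v q) (pjq v p - pjq v x)
                linarith
        linarith
    · exact ⟨fun _ => [], fun h => absurd h hv⟩
  choose FF hFF using lemA
  -- the binary tree of words
  set node : List Bool → List (Fin s) :=
    fun β => β.foldr (fun b w => w ++ FF ((rotL rot w).symm u) b) [] with hnode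
  have node_nil : node [] = [] := rfl
  have node_cons : ∀ b β, node (b :: β) = node β ++ FF ((rotL rot (node β)).symm u) b :=
    fun b β => rfl
  have hunode : ∀ β, ‖(rotL rot (node β)).symm u‖ = 1 := fun β => by
    rw [norm_rotL_symm]; exact hu
  have hlam0 : ∀ i, 0 < lam i := fun i => (hlam i).1
  -- scale bounds along the tree
  have hlamnode : ∀ β : List Bool, ρ' ^ β.length ≤ lamL lam (node β)
      ∧ lamL lam (node β) ≤ 1 := by
    intro β
    induction β with
    | nil => simp [node_nil]
    | cons b β ih =>
      rw [node_cons, lamL_append]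
      obtain ⟨hFb, -⟩ := hFF ((rotL rot (node β)).symm u) (hunode β)
      constructor
      · calc ρ' ^ (b :: β).length = ρ' ^ β.length * ρ' := pow_succ _ _
          _ ≤ lamL lam (node β) * lamL lam (FF ((rotL rot (node β)).symm u) b) :=
              mul_le_mul ih.1 (hFb b).1 hρ'0.le
                (le_trans (pow_nonneg hρ'0.le _) ih.1)
        
      · calc lamL lam (node β) * lamL lam (FF ((rotL rot (node β)).symm u) b)
            ≤ 1 * 1 := mul_le_mul ih.2 ((hFb b).2.trans hε1)
              (lamL_pos lam hlam0 _).le zero_le_one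
          _ = 1 := mul_one 1
  -- the Cantor scheme
  set E : List Bool → Set ℝ := fun β => pjq u '' (Tl T (node β) '' J) with hE
  have hpjcont : Continuous (pjq u) := by
    show Continuous fun x : ℂ => (x * (starRingEnd ℂ) u).re
    fun_prop
  have h1 : ∀ β, (E β).Nonempty := fun β => by
    obtain ⟨a, ha⟩ := hJne
    exact ⟨pjq u (Tl T (node β) a), Set.mem_image_of_mem _ (Set.mem_image_of_mem _ ha)⟩
  have h2 : ∀ β, IsCompact (E β) := fun β =>
    ((hJc.image (Tl_continuous T lam rot z hT (node β))).image hpjcont)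
  have h3 : ∀ (β : List Bool) (b : Bool), E (b :: β) ⊆ E β := by
    intro β b
    rw [hE]
    simp only
    rw [node_cons, Tl_append, Set.image_comp (Tl T (node β))]
    apply Set.image_mono
    apply Set.image_mono
    exact Tl_image_subset T hself _
  have h4 : ∀ β : List Bool, ∀ x ∈ E (false :: β), ∀ y ∈ E (true :: β),
      (d/2) * ρ' ^ β.length ≤ |x - y| := by
    intro β x hx y hy
    obtain ⟨-, hsepβ⟩ := hFF ((rotL rot (node β)).symm u) (hunode β)
    rw [hE] at hx hy
    simp only at hx hy
    rw [node_cons, Tl_append, Set.image_comp (Tl T (node β))] at hx hy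
    obtain ⟨p, hp, rfl⟩ := hx
    obtain ⟨q, hq, rfl⟩ := hy
    obtain ⟨p', hp', rfl⟩ := hp
    obtain ⟨q', hq', rfl⟩ := hq
    have heq : pjq u (Tl T (node β) p') - pjq u (Tl T (node β) q')
        = lamL lam (node β) * (pjq ((rotL rot (node β)).symm u) p'
          - pjq ((rotL rot (node β)).symm u) q') :=
      pjq_Tl_sub T lam rot z hT (node β) u _ _
    rw [heq, abs_mul, abs_of_pos (lamL_pos lam hlam0 _)]
    have hs2 := hsepβ p' hp' q' hq'
    calc (d/2) * ρ' ^ β.length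
        ≤ |pjq ((rotL rot (node β)).symm u) p'
            - pjq ((rotL rot (node β)).symm u) q'| * lamL lam (node β) :=
          mul_le_mul hs2 (hlamnode β).1 (pow_nonneg hρ'0.le _) (abs_nonneg _)
      _ = lamL lam (node β) * _ := mul_comm _ _
  have hmain := cantor_dim E ρ' (d/2) hρ'0 hρ'1 (by linarith) h1 h2 h3 h4
  have hE0 : E [] = pjq u '' J := by
    rw [hE]
    simp only [node_nil, Tl_nil, Set.image_id]
  rw [himg, ← hE0]
  exact hmain
end
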